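/- arXiv:math/0404230 — 5 statements merged into one kernel-verified Lean document; each statement's English description precedes it below -/
import Mathlib

section
/- Let δ ∈ [0,1] and let (t_n) be a sequence in [0,1] converging to δ. Then there exists a sequence (t̂_n) in (0,1] such that (i) t_n ≤ t̂_n for all n, (ii) t̂_n decreases monotonically to δ, and (iii) lim_{n→∞} (1/n) log t̂_n exists and equals limsup_{n→∞} (1/n) log t_n (where log 0 = -∞). -/
open Filter Topology

/-- Extended-real logarithm with the convention `log 0 = -∞` (for nonnegative inputs). -/
noncomputable def elog (x : ℝ) : EReal := if x ≤ 0 then ⊥ else ((Real.log x : ℝ) : EReal)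

lemma elog_mono : Monotone elog := by
  intro x y hxy
  unfold elog
  by_cases hx : x ≤ 0
  · simp [hx]
  · have hy : ¬ y ≤ 0 := fun h => hx (hxy.trans h)
    rw [if_neg hx, if_neg hy]
    exact_mod_cast Real.log_le_log (not_le.1 hx) hxy

lemma elog_nonpos {x : ℝ} (hx : x ≤ 1) : elog x ≤ 0 := by
  unfold elog
  by_cases h : x ≤ 0
  · simp [h]
  · rw [if_neg h]
    exact_mod_cast Real.log_nonpos (not_le.1 h).le hx

lemma elog_exp (r : ℝ) : elog (Real.exp r) = (r : EReal) := by
  unfold elog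
  rw [if_neg (not_le.2 (Real.exp_pos r)), Real.log_exp]

lemma aux_mul_le {c : ℝ} (hc : 0 < c) (hc1 : c ≤ 1) {x : EReal} (hx : x ≤ 0) :
    x ≤ (c : EReal) * x := by
  induction x using EReal.rec with
  | bot => rw [EReal.coe_mul_bot_of_pos hc]
  | coe x =>
      rw [← EReal.coe_mul, EReal.coe_le_coe_iff]
      have hx' : x ≤ 0 := by exact_mod_cast hx
      nlinarith
  | top => exact absurd hx (by simp)

lemma elog_ciSup_le {u : ℕ → ℝ} (hb : BddAbove (Set.range u)) :
    elog (⨆ k, u k) ≤ ⨆ k, elog (u k) := by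
  rw [← EReal.ge_of_forall_gt_iff_ge]
  intro z hz
  by_cases hs : (⨆ k, u k) ≤ 0
  · rw [elog, if_pos hs] at hz
    exact absurd hz (by simp)
  · push_neg at hs
    rw [elog, if_neg (not_le.2 hs)] at hz
    have hz' : z < Real.log (⨆ k, u k) := by exact_mod_cast hz
    have hlt : Real.exp z < ⨆ k, u k := by
      have := Real.exp_lt_exp.2 hz'
      rwa [Real.exp_log hs] at this
    obtain ⟨k, hk⟩ := exists_lt_of_lt_ciSup hlt
    have hk0 : 0 < u k := lt_trans (Real.exp_pos z) hk
    have hzk : (z : EReal) ≤ elog (u k) := by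
      rw [elog, if_neg (not_le.2 hk0)]
      have hlk : z < Real.log (u k) := by
        have := Real.log_lt_log (Real.exp_pos z) hk
        rwa [Real.log_exp] at this
      exact_mod_cast hlk.le
    exact hzk.trans (le_iSup (fun k => elog (u k)) k)

theorem stmt0 (δ : ℝ) (hδ : δ ∈ Set.Icc (0:ℝ) 1)
    (t : ℕ → ℝ) (ht : ∀ n, t n ∈ Set.Icc (0:ℝ) 1)
    (hconv : Tendsto t atTop (nhds δ)) :
    ∃ that : ℕ → ℝ,
      (∀ n, that n ∈ Set.Ioc (0:ℝ) 1) ∧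
      (∀ n, t n ≤ that n) ∧
      Antitone that ∧
      Tendsto that atTop (nhds δ) ∧
      Tendsto (fun n : ℕ => ((1 / (n:ℝ) : ℝ) : EReal) * elog (that n)) atTop
        (nhds (Filter.limsup (fun n : ℕ => ((1 / (n:ℝ) : ℝ) : EReal) * elog (t n)) atTop)) := by
  classical
  set a : ℕ → EReal := fun n => ((1 / (n:ℝ) : ℝ) : EReal) * elog (t n) with ha
  set L : EReal := Filter.limsup a atTop with hL
  -- tail suprema of t
  have hbdd : ∀ n : ℕ, BddAbove (Set.range fun k : ℕ => t (k + n)) := by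
    intro n
    refine ⟨1, ?_⟩
    rintro x ⟨k, rfl⟩
    exact (ht _).2
  set s : ℕ → ℝ := fun n => ⨆ k : ℕ, t (k + n) with hs
  have hts : ∀ n, t n ≤ s n := by
    intro n
    simpa using le_ciSup (hbdd n) 0
  have hs_le_one : ∀ n, s n ≤ 1 := fun n => ciSup_le fun k => (ht _).2
  have hs_anti : Antitone s := by
    refine antitone_nat_of_succ_le fun n => ciSup_le fun k => ?_
    have he : k + (n + 1) = (k + 1) + n := by ring
    rw [hs, he]
    exact le_ciSup (hbdd n) (k + 1)
  have hδ_le_s : ∀ n, δ ≤ s n := by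
    intro n
    exact le_of_tendsto' (hconv.comp (tendsto_add_atTop_nat n)) fun k => le_ciSup (hbdd n) k
  have hs_tendsto : Tendsto s atTop (𝓝 δ) := by
    rw [Metric.tendsto_atTop]
    intro ε hε
    obtain ⟨N, hN⟩ := Metric.tendsto_atTop.1 hconv (ε / 2) (by linarith)
    refine ⟨N, fun n hn => ?_⟩
    have h1 : s n ≤ δ + ε / 2 := by
      refine ciSup_le fun k => ?_
      have h2 := hN (k + n) (hn.trans (Nat.le_add_left n k))
      rw [Real.dist_eq, abs_lt] at h2
      linarith [h2.2]
    rw [Real.dist_eq, abs_lt]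
    constructor
    · linarith [hδ_le_s n]
    · linarith
  -- tail suprema of a
  set S : ℕ → EReal := fun n => ⨆ k : ℕ, a (k + n) with hS
  have hS_anti : Antitone S := by
    refine antitone_nat_of_succ_le fun n => iSup_le fun k => ?_
    have he : k + (n + 1) = (k + 1) + n := by ring
    rw [hS, he]
    exact le_iSup (fun k : ℕ => a (k + n)) (k + 1)
  have hL_eq : L = ⨅ n, S n := limsup_eq_iInf_iSup_of_nat'
  have hS_tendsto : Tendsto S atTop (𝓝 L) := hL_eq ▸ tendsto_atTop_iInf hS_anti
  have ha_nonpos : ∀ n : ℕ, a n ≤ 0 := by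
    intro n
    have h1 : (0:ℝ) ≤ 1 / (n:ℝ) := by positivity
    calc a n ≤ ((1 / (n:ℝ) : ℝ) : EReal) * 0 :=
          mul_le_mul_of_nonneg_left (elog_nonpos (ht n).2) (by exact_mod_cast h1)
      _ = 0 := mul_zero _
  have hL_le : L ≤ 0 := limsup_le_of_le (by isBoundedDefault) (Eventually.of_forall ha_nonpos)
  -- key inequality
  have key : ∀ n : ℕ, 1 ≤ n → ((1 / (n:ℝ) : ℝ) : EReal) * elog (s n) ≤ S n := by
    intro n hn
    have hnpos : (0:ℝ) < n := by exact_mod_cast hn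
    have h2 : (⨆ k : ℕ, elog (t (k + n))) ≤ ((n:ℝ) : EReal) * S n := by
      refine iSup_le fun k => ?_
      have hkpos : (0:ℝ) < ((k + n : ℕ) : ℝ) := by positivity
      have hfrac : (0:ℝ) < (n:ℝ) / ((k + n : ℕ) : ℝ) := by positivity
      have hfrac1 : (n:ℝ) / ((k + n : ℕ) : ℝ) ≤ 1 := by
        rw [div_le_one hkpos]
        exact_mod_cast Nat.le_add_left n k
      have hle : elog (t (k + n)) ≤ (((n:ℝ) / ((k + n : ℕ) : ℝ) : ℝ) : EReal) * elog (t (k + n)) :=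
        aux_mul_le hfrac hfrac1 (elog_nonpos (ht _).2)
      have heq : (((n:ℝ) / ((k + n : ℕ) : ℝ) : ℝ) : EReal) * elog (t (k + n))
          = ((n:ℝ) : EReal) * a (k + n) := by
        rw [ha]
        rw [← mul_assoc, ← EReal.coe_mul]
        congr 2
        field_simp
      rw [heq] at hle
      refine hle.trans (mul_le_mul_of_nonneg_left ?_ ?_)
      · exact le_iSup (fun k : ℕ => a (k + n)) k
      · exact_mod_cast hnpos.le
    have h3 : elog (s n) ≤ ((n:ℝ) : EReal) * S n := (elog_ciSup_le (hbdd n)).trans h2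
    calc ((1 / (n:ℝ) : ℝ) : EReal) * elog (s n)
        ≤ ((1 / (n:ℝ) : ℝ) : EReal) * (((n:ℝ) : EReal) * S n) :=
          mul_le_mul_of_nonneg_left h3 (by exact_mod_cast (by positivity : (0:ℝ) ≤ 1 / (n:ℝ)))
      _ = ((1 / (n:ℝ) * (n:ℝ) : ℝ) : EReal) * S n := by rw [← mul_assoc, ← EReal.coe_mul]
      _ = S n := by rw [one_div_mul_cancel hnpos.ne']; exact one_mul _
  -- sqrt tendsto
  have hsqrt : Tendsto (fun n : ℕ => Real.sqrt n) atTop atTop := by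
    refine tendsto_atTop.2 fun b => ?_
    filter_upwards [eventually_ge_atTop ⌈b * b⌉₊] with n hn
    rcases le_or_gt b 0 with hb | hb
    · exact hb.trans (Real.sqrt_nonneg _)
    · have h1 : b * b ≤ (n : ℝ) := le_trans (Nat.le_ceil _) (by exact_mod_cast hn)
      have h2 := Real.sqrt_le_sqrt h1
      rwa [Real.sqrt_mul_self hb.le] at h2
  -- choose the shifting sequence c
  obtain ⟨c, hc_anti, hc_nonpos, hc_atBot, hc_tendsto⟩ :
      ∃ c : ℕ → ℝ, Antitone c ∧ (∀ n, c n ≤ 0) ∧ Tendsto c atTop atBot ∧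
        Tendsto (fun n : ℕ => ((c n / n : ℝ) : EReal)) atTop (𝓝 L) := by
    rcases eq_or_ne L ⊥ with hbot | hbot
    · refine ⟨fun n => -((n:ℝ))^2, ?_, ?_, ?_, ?_⟩
      · intro m n hmn
        simp only [neg_le_neg_iff]
        gcongr
      · intro n
        simpa using sq_nonneg ((n:ℝ))
      · rw [tendsto_neg_atBot_iff]
        refine tendsto_atTop_mono (fun n => ?_) tendsto_natCast_atTop_atTop
        rcases Nat.eq_zero_or_pos n with rfl | hp
        · simp
        · have h1 : (1:ℝ) ≤ (n:ℝ) := by exact_mod_cast hp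
          nlinarith
      · rw [hbot, EReal.tendsto_nhds_bot_iff_real]
        intro x
        filter_upwards [eventually_ge_atTop (⌈|x|⌉₊ + 1)] with n hn
        have hn1 : (1:ℝ) ≤ (n:ℝ) := by
          have : 1 ≤ n := le_trans (Nat.le_add_left 1 ⌈|x|⌉₊) hn
          exact_mod_cast this
        have hnx : |x| < (n:ℝ) := by
          have h1 : (⌈|x|⌉₊ : ℝ) + 1 ≤ (n:ℝ) := by exact_mod_cast hn
          have h2 : |x| ≤ (⌈|x|⌉₊ : ℝ) := Nat.le_ceil _
          linarith
        have heq : -((n:ℝ))^2 / (n:ℝ) = -(n:ℝ) := by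
          rw [pow_two, neg_div, mul_div_assoc, div_self (by linarith), mul_one]
        rw [heq]
        have : -(n:ℝ) < x := by
          have := neg_abs_le x
          linarith
        exact_mod_cast this
    · have htop : L ≠ ⊤ := by
        intro h
        rw [h] at hL_le
        exact absurd hL_le (by simp)
      obtain ⟨Lr, hLr⟩ : ∃ r : ℝ, L = (r : EReal) := ⟨L.toReal, (EReal.coe_toReal htop hbot).symm⟩
      have hLr0 : Lr ≤ 0 := by
        rw [hLr] at hL_le
        exact_mod_cast hL_le
      refine ⟨fun n => (n:ℝ) * Lr - Real.sqrt n, ?_, ?_, ?_, ?_⟩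
      · intro m n hmn
        have h1 : (m:ℝ) ≤ (n:ℝ) := by exact_mod_cast hmn
        have h2 : Real.sqrt m ≤ Real.sqrt n := Real.sqrt_le_sqrt h1
        have h3 : (n:ℝ) * Lr ≤ (m:ℝ) * Lr := mul_le_mul_of_nonpos_right h1 hLr0
        dsimp only
        linarith
      · intro n
        have h1 : (n:ℝ) * Lr ≤ 0 := mul_nonpos_of_nonneg_of_nonpos (Nat.cast_nonneg n) hLr0
        dsimp only
        linarith [Real.sqrt_nonneg ((n:ℝ))]
      · refine tendsto_atBot_mono (fun n => ?_) (tendsto_neg_atBot_iff.2 hsqrt)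
        have h1 : (n:ℝ) * Lr ≤ 0 := mul_nonpos_of_nonneg_of_nonpos (Nat.cast_nonneg n) hLr0
        linarith [Real.sqrt_nonneg ((n:ℝ))]
      · rw [hLr]
        have hreal : Tendsto (fun n : ℕ => ((n:ℝ) * Lr - Real.sqrt n) / n) atTop (𝓝 Lr) := by
          have h0 : Tendsto (fun n : ℕ => Lr - 1 / Real.sqrt n) atTop (𝓝 (Lr - 0)) :=
            tendsto_const_nhds.sub (by simpa [one_div, Pi.inv_def] using hsqrt.inv_tendsto_atTop)
          rw [sub_zero] at h0
          refine Tendsto.congr' ?_ h0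
          filter_upwards [eventually_ge_atTop 1] with n hn
          have hnpos : (0:ℝ) < n := by exact_mod_cast hn
          have hsq : Real.sqrt n * Real.sqrt n = (n:ℝ) := Real.mul_self_sqrt hnpos.le
          have hsqpos : (0:ℝ) < Real.sqrt n := Real.sqrt_pos.2 hnpos
          have hdiv : Real.sqrt n / (n:ℝ) = 1 / Real.sqrt n := by
            rw [div_eq_div_iff hnpos.ne' hsqpos.ne', one_mul]
            exact hsq
          rw [sub_div, mul_comm, mul_div_assoc, div_self hnpos.ne', mul_one, hdiv]
        exact ((continuous_coe_real_ereal.tendsto Lr).comp hreal).congr fun n => rfl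
  -- the construction
  set that : ℕ → ℝ := fun n => max (s n) (Real.exp (c n)) with hthat
  have hthat_pos : ∀ n, 0 < that n := fun n => lt_of_lt_of_le (Real.exp_pos _) (le_max_right _ _)
  refine ⟨that, fun n => ⟨hthat_pos n, max_le (hs_le_one n) (Real.exp_le_one_iff.2 (hc_nonpos n))⟩,
    fun n => (hts n).trans (le_max_left _ _), ?_, ?_, ?_⟩
  · exact hs_anti.max (Real.exp_monotone.comp_antitone hc_anti)
  · have h := hs_tendsto.max ((Real.tendsto_exp_atBot).comp hc_atBot)
    rw [max_eq_left hδ.1] at h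
    exact h
  · have lower : ∀ᶠ n : ℕ in atTop,
        ((c n / n : ℝ) : EReal) ≤ ((1 / (n:ℝ) : ℝ) : EReal) * elog (that n) := by
      filter_upwards [eventually_ge_atTop 1] with n hn
      have hnpos : (0:ℝ) < n := by exact_mod_cast hn
      have h1 : ((c n : ℝ) : EReal) ≤ elog (that n) := by
        rw [← elog_exp (c n)]
        exact elog_mono (le_max_right _ _)
      have h2 : ((c n / n : ℝ) : EReal) = ((1 / (n:ℝ) : ℝ) : EReal) * ((c n : ℝ) : EReal) := by
        rw [← EReal.coe_mul]
        norm_cast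
        ring
      rw [h2]
      exact mul_le_mul_of_nonneg_left h1 (by exact_mod_cast (by positivity : (0:ℝ) ≤ 1 / (n:ℝ)))
    have upper : ∀ᶠ n : ℕ in atTop,
        ((1 / (n:ℝ) : ℝ) : EReal) * elog (that n) ≤ max (S n) ((c n / n : ℝ) : EReal) := by
      filter_upwards [eventually_ge_atTop 1] with n hn
      have hnpos : (0:ℝ) < n := by exact_mod_cast hn
      have hmax : elog (that n) = max (elog (s n)) ((c n : ℝ) : EReal) := by
        rw [hthat]
        rw [elog_mono.map_max, elog_exp]
      rw [hmax]
      have hsplit : ((1 / (n:ℝ) : ℝ) : EReal) * max (elog (s n)) ((c n : ℝ) : EReal)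
          ≤ max (((1 / (n:ℝ) : ℝ) : EReal) * elog (s n))
              (((1 / (n:ℝ) : ℝ) : EReal) * ((c n : ℝ) : EReal)) := by
        rcases max_cases (elog (s n)) (((c n : ℝ) : EReal)) with ⟨h, _⟩ | ⟨h, _⟩ <;> rw [h]
        · exact le_max_left _ _
        · exact le_max_right _ _
      refine hsplit.trans (max_le_max (key n hn) (le_of_eq ?_))
      rw [← EReal.coe_mul]
      norm_cast
      ring
    have hupper_t : Tendsto (fun n : ℕ => max (S n) ((c n / n : ℝ) : EReal)) atTop (𝓝 L) := by
      have h := hS_tendsto.max hc_tendsto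
      rwa [max_self] at h
    exact tendsto_of_tendsto_of_tendsto_of_le_of_le' hc_tendsto hupper_t lower upper
end

section
/- Let M ≥ 2, and for each pair of distinct indices a,b in {1,...,M} let v(a,b) ∈ [-∞,0]. Define, for distinct i,j, U₀(i,j) = max over 0 ≤ k ≤ M-2 and over (k+2)-tuples L = (i = l₀, l₁, ..., l_k, l_{k+1} = j) of distinct indices, of Σ_{s=0}^{k} v(l_s, l_{s+1}). Then U₀ satisfies the reverse triangle inequality: for any three distinct indices i, j, k, U₀(i,j) + U₀(j,k) ≤ U₀(i,k). -/
/-- Sum of the weights `v` along the consecutive pairs of a list of indices. -/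
noncomputable def pathSum {M : ℕ} (v : Fin M → Fin M → EReal) (l : List (Fin M)) : EReal :=
  (List.zipWith v l l.tail).sum

/-- `U0 v i j` is the maximal total weight of a self-avoiding path from `i` to `j`. -/
noncomputable def U0 {M : ℕ} (v : Fin M → Fin M → EReal) (i j : Fin M) : EReal :=
  sSup { s : EReal | ∃ l : List (Fin M), l.Nodup ∧ l.head? = some i ∧ l.getLast? = some j ∧
    2 ≤ l.length ∧ s = pathSum v l }

lemma pathSum_cons_cons {M : ℕ} (v : Fin M → Fin M → EReal) (a b : Fin M) (l : List (Fin M)) :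
    pathSum v (a :: b :: l) = v a b + pathSum v (b :: l) := by
  simp [pathSum]

lemma pathSum_glue {M : ℕ} (v : Fin M → Fin M → EReal) (a : Fin M) :
    ∀ (l₁ l₂ : List (Fin M)),
      pathSum v (l₁ ++ a :: l₂) = pathSum v (l₁ ++ [a]) + pathSum v (a :: l₂)
  | [], l₂ => by simp [pathSum]
  | [b], l₂ => by simp [pathSum, add_assoc]
  | b :: c :: t, l₂ => by
    have ih := pathSum_glue v a (c :: t) l₂
    simp only [List.cons_append] at ih ⊢
    rw [pathSum_cons_cons, pathSum_cons_cons, ih, add_assoc]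

lemma pathSum_nonpos {M : ℕ} {v : Fin M → Fin M → EReal}
    (hv : ∀ a b : Fin M, a ≠ b → v a b ≤ 0) :
    ∀ (l : List (Fin M)), l.Chain' (· ≠ ·) → pathSum v l ≤ 0
  | [] => fun _ => le_of_eq rfl
  | [_] => fun _ => le_of_eq rfl
  | a :: b :: l => fun h => by
    rw [pathSum_cons_cons]
    rcases List.isChain_cons_cons.mp h with ⟨hab, h'⟩
    exact add_nonpos (hv a b hab) (pathSum_nonpos hv (b :: l) h')

lemma deloop {M : ℕ} {v : Fin M → Fin M → EReal}
    (hv : ∀ a b : Fin M, a ≠ b → v a b ≤ 0) :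
    ∀ (n : ℕ) (l : List (Fin M)), l.length ≤ n → l.Chain' (· ≠ ·) →
      ∃ l' : List (Fin M), l'.Nodup ∧ l'.head? = l.head? ∧ l'.getLast? = l.getLast? ∧
        pathSum v l ≤ pathSum v l' := by
  intro n
  induction n with
  | zero =>
    intro l hl _
    exact ⟨l, by simpa using List.length_eq_zero_iff.mp (Nat.le_zero.mp hl) ▸ List.nodup_nil,
      rfl, rfl, le_refl _⟩
  | succ n ih =>
    intro l hl hc
    by_cases hnd : l.Nodup
    · exact ⟨l, hnd, rfl, rfl, le_refl _⟩
    · obtain ⟨a, hdup⟩ : ∃ a, List.Sublist [a, a] l := by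
        by_contra h; push_neg at h; exact hnd (List.nodup_iff_sublist.mpr h)
      obtain ⟨r₁, r₂, hl_eq, ha₁, hsub⟩ := List.cons_sublist_iff.mp hdup
      have ha₂ : a ∈ r₂ := List.singleton_sublist.mp hsub
      obtain ⟨s₁, t₁, rfl⟩ := List.append_of_mem ha₁
      obtain ⟨s₂, t₂, rfl⟩ := List.append_of_mem ha₂
      set l₂ : List (Fin M) := t₁ ++ s₂ with hl₂
      have hL : l = s₁ ++ a :: (l₂ ++ a :: t₂) := by simp [hl_eq, hl₂]
      -- decompose the chain
      rw [hL] at hc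
      rw [List.Chain', List.isChain_append] at hc
      obtain ⟨hc₁, hc₂, hglue⟩ := hc
      have hc₂' : List.Chain' (· ≠ ·) ((a :: l₂) ++ (a :: t₂)) := hc₂
      rw [List.Chain', List.isChain_append] at hc₂'
      obtain ⟨hcal₂, hcat₂, hglue₂⟩ := hc₂'
      -- the middle loop
      have hmidchain : List.Chain' (· ≠ ·) ((a :: l₂) ++ [a]) := by
        rw [List.Chain', List.isChain_append]
        exact ⟨hcal₂, List.isChain_singleton a, fun x hx y hy => by
          simp only [List.head?_cons, Option.mem_def, Option.some.injEq] at hy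
          exact hy ▸ hglue₂ x hx a rfl⟩
      have hmid : pathSum v ((a :: l₂) ++ [a]) ≤ 0 := pathSum_nonpos hv _ hmidchain
      -- the new shorter list
      set m : List (Fin M) := s₁ ++ a :: t₂ with hm
      have hmchain : List.Chain' (· ≠ ·) m := by
        rw [hm, List.Chain', List.isChain_append]
        exact ⟨hc₁, hcat₂, fun x hx y hy => by
          simp only [List.head?_cons, Option.mem_def, Option.some.injEq] at hy
          exact hy ▸ hglue x hx a (by simp)⟩
      have hmlen : m.length ≤ n := by
        have : l.length = s₁.length + 1 + l₂.length + 1 + t₂.length := by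
          rw [hL]; simp; omega
        have hm' : m.length = s₁.length + 1 + t₂.length := by rw [hm]; simp; omega
        omega
      have hsum : pathSum v l ≤ pathSum v m := by
        have h2 : pathSum v (a :: (l₂ ++ a :: t₂)) =
            pathSum v ((a :: l₂) ++ [a]) + pathSum v (a :: t₂) := by
          rw [← List.cons_append, pathSum_glue]
        have h3 : pathSum v m = pathSum v (s₁ ++ [a]) + pathSum v (a :: t₂) := by
          rw [hm, pathSum_glue]
        rw [hL, pathSum_glue, h2, h3]
        have hstep : pathSum v ((a :: l₂) ++ [a]) + pathSum v (a :: t₂) ≤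
            pathSum v (a :: t₂) := by
          calc pathSum v ((a :: l₂) ++ [a]) + pathSum v (a :: t₂)
              ≤ 0 + pathSum v (a :: t₂) := add_le_add_left hmid _
            _ = pathSum v (a :: t₂) := zero_add _
        exact add_le_add (le_refl (pathSum v (s₁ ++ [a]))) hstep
      have hhead : m.head? = l.head? := by
        rw [hL, hm]; cases s₁ <;> simp
      have hlast : m.getLast? = l.getLast? := by
        rw [hL, hm, List.getLast?_append_cons, List.getLast?_append_cons,
          show a :: (l₂ ++ a :: t₂) = (a :: l₂) ++ a :: t₂ from rfl,
          List.getLast?_append_cons]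
      obtain ⟨l', hnd', hh', hl', hs'⟩ := ih m hmlen hmchain
      exact ⟨l', hnd', hh'.trans hhead, hl'.trans hlast, hsum.trans hs'⟩

theorem stmt4 (M : ℕ) (hM : 2 ≤ M) (v : Fin M → Fin M → EReal)
    (hv : ∀ a b : Fin M, a ≠ b → v a b ≤ 0)
    (i j k : Fin M) (hij : i ≠ j) (hjk : j ≠ k) (hik : i ≠ k) :
    U0 v i j + U0 v j k ≤ U0 v i k := by
  apply EReal.add_le_of_forall_lt
  intro a' ha' b' hb'
  rw [U0] at ha' hb'
  obtain ⟨s, hs, has⟩ := lt_sSup_iff.mp ha'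
  obtain ⟨t, ht, hbt⟩ := lt_sSup_iff.mp hb'
  obtain ⟨p, hpnd, hph, hpl, hplen, rfl⟩ := hs
  obtain ⟨q, hqnd, hqh, hql, hqlen, rfl⟩ := ht
  -- q starts with j
  have hq_cons : q = j :: q.tail := List.eq_cons_of_mem_head? hqh
  -- p ends with j : p = p.dropLast ++ [j]
  have hpne : p ≠ [] := by rintro rfl; simp at hph
  have hgl : p.getLast hpne = j := by
    have h := List.getLast?_eq_getLast hpne
    rw [hpl] at h
    exact (Option.some_injective _ h.symm)
  have hp_decomp : p = p.dropLast ++ [j] := by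
    conv_lhs => rw [← List.dropLast_append_getLast hpne]
    rw [hgl]
  -- the concatenation
  set c : List (Fin M) := p ++ q.tail with hcdef
  have hqtne : q.tail ≠ [] := by
    intro h
    rw [hq_cons] at hqlen
    simp [h] at hqlen
  have hcsum : pathSum v c = pathSum v p + pathSum v q := by
    rw [hcdef]
    conv_lhs => rw [hp_decomp, List.append_assoc, List.singleton_append]
    rw [pathSum_glue, ← hp_decomp, ← hq_cons]
  have hcchain : List.Chain' (· ≠ ·) c := by
    rw [hcdef, List.Chain', List.isChain_append]
    refine ⟨hpnd.isChain, (hqnd.isChain).tail, fun x hx y hy => ?_⟩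
    have hx' : x = j := by
      rw [hpl] at hx
      simp only [Option.mem_def, Option.some.injEq] at hx
      exact hx.symm
    have hyq : y ∈ q.tail := List.mem_of_mem_head? hy
    have : j ∉ q.tail := by
      have := hq_cons ▸ hqnd
      exact (List.nodup_cons.mp this).1
    subst hx'; exact fun h => this (h ▸ hyq)
  have hchead : c.head? = some i := by
    rw [hcdef, List.head?_append_of_ne_nil _ hpne, hph]
  have hclast : c.getLast? = some k := by
    rw [hcdef, List.getLast?_append_of_ne_nil _ hqtne]
    rw [hq_cons] at hql
    rwa [← List.getLast?_append_of_ne_nil [j] hqtne]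
  obtain ⟨l', hnd', hh', hl', hs'⟩ := deloop hv c.length c le_rfl hcchain
  rw [hchead] at hh'; rw [hclast] at hl'
  have hlen' : 2 ≤ l'.length := by
    match l', hh', hl' with
    | [], hh', _ => simp at hh'
    | [x], hh', hl' =>
      exfalso
      simp only [List.head?_cons, Option.some.injEq] at hh'
      simp only [List.getLast?_singleton, Option.some.injEq] at hl'
      exact hik (hh' ▸ hl' ▸ rfl)
    | x :: y :: l, _, _ => simp
  have hmem : pathSum v l' ∈ { s : EReal | ∃ l : List (Fin M), l.Nodup ∧ l.head? = some i ∧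
      l.getLast? = some k ∧ 2 ≤ l.length ∧ s = pathSum v l } :=
    ⟨l', hnd', hh', hl', hlen', rfl⟩
  calc a' + b' ≤ pathSum v p + pathSum v q := add_le_add has.le hbt.le
    _ = pathSum v c := hcsum.symm
    _ ≤ pathSum v l' := hs'
    _ ≤ U0 v i k := le_sSup hmem
end

section
/- Let M ≥ 1, let ζ₁,...,ζ_M index sets, let U : {1,...,M}² → [-∞,0] be nonpositive, and for each i let I_i : ℝ^d → [0,∞] be a good rate function whose domain of finiteness Q_i is a nonempty compact subset of a fixed compact cube K ⊂ ℝ^d. For M ≥ 2 define, for z ∈ ℝ^d, J_U(z) = min over permutations σ of {1,...,M}, inf over probability vectors v ∈ Ω_M, inf over x ∈ (ℝ^d)^M with Σ v_i x_i = z, of [ −Σ_{i=1}^{M-1}(Σ_{j=1}^i v_j) U(σ(i),σ(i+1)) + Σ_{i=1}^M v_i I_{σ(i)}(x_i) ]; for M = 1, J_U = I₁. Then J_U is a good rate function (nonnegative, lower semicontinuous, with compact level sets), J_U ≤ min_i I_i pointwise, and its domain of finiteness is contained in K. -/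
/-- The rate function `J_U`: optimization over a visiting order `σ`, time proportions `v`
in the probability simplex, and locations `x` with `∑ v i • x i = z`, of the total
routing cost plus resting cost. -/
noncomputable def JU (d M : ℕ) (U : Fin M → Fin M → EReal)
    (I : Fin M → (Fin d → ℝ) → EReal) (z : Fin d → ℝ) : EReal :=
  sInf { c : EReal | ∃ (σ : Equiv.Perm (Fin M)) (v : Fin M → ℝ) (x : Fin M → Fin d → ℝ),
    (∀ i, v i ∈ Set.Icc (0:ℝ) 1) ∧ (∑ i, v i) = 1 ∧ (∑ i, v i • x i) = z ∧
    c = -(∑ i : Fin M, ∑ j : Fin M,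
            if (j:ℕ) = (i:ℕ) + 1 then
              ((∑ k ∈ Finset.univ.filter (fun k : Fin M => (k:ℕ) ≤ (i:ℕ)), v k : ℝ) : EReal)
                * U (σ i) (σ j)
            else 0)
        + ∑ i : Fin M, ((v i : ℝ) : EReal) * I (σ i) (x i) }


open Finset Set Filter

namespace JUproof

variable {α : Type*} [TopologicalSpace α]

lemma ne_top_of_nonpos {a : EReal} (h : a ≤ 0) : a ≠ ⊤ := by rintro rfl; simp at h

lemma neg_nonneg_of_nonpos {a : EReal} (h : a ≤ 0) : 0 ≤ -a := by
  rw [← neg_zero]; exact EReal.neg_le_neg_iff.2 h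

lemma mul_nonpos_er {s : ℝ} {u : EReal} (hs : 0 ≤ s) (hu : u ≤ 0) : (s : EReal) * u ≤ 0 := by
  have := mul_le_mul_of_nonneg_left hu (by exact_mod_cast hs : (0:EReal) ≤ (s:EReal))
  simpa using this

lemma coe_mul_neg (y : ℝ) (x : EReal) : (y:EReal) * (-x) = -((y:EReal) * x) := by
  rw [EReal.mul_comm, EReal.neg_mul, EReal.mul_comm]

lemma neg_sum_nonpos {ι : Type*} (s : Finset ι) (f : ι → EReal) (h : ∀ i ∈ s, f i ≤ 0) :
    -(∑ i ∈ s, f i) = ∑ i ∈ s, -(f i) := by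
  classical
  induction s using Finset.induction_on with
  | empty => simp
  | @insert a s ha ih =>
    have hs : ∑ i ∈ s, f i ≤ 0 :=
      Finset.sum_nonpos fun i hi => h i (Finset.mem_insert_of_mem hi)
    rw [Finset.sum_insert ha, Finset.sum_insert ha,
      EReal.neg_add (Or.inr (ne_top_of_nonpos hs))
        (Or.inl (ne_top_of_nonpos (h a (Finset.mem_insert_self a s)))),
      sub_eq_add_neg, ih (fun i hi => h i (Finset.mem_insert_of_mem hi))]

lemma lsc_comp_continuous {β : Type*} [TopologicalSpace β] {f : β → EReal} {g : α → β}
    (hf : LowerSemicontinuous f) (hg : Continuous g) :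
    LowerSemicontinuous fun p => f (g p) := by
  rw [lowerSemicontinuous_iff_isOpen_preimage]
  intro y
  exact (lowerSemicontinuous_iff_isOpen_preimage.1 hf y).preimage hg

/-- product of a continuous nonnegative real function with a nonnegative lsc EReal function
is lsc. -/
lemma lsc_coe_mul {f : α → ℝ} {g : α → EReal} (hf : Continuous f) (hf0 : ∀ p, 0 ≤ f p)
    (hg : LowerSemicontinuous g) (hg0 : ∀ p, 0 ≤ g p) :
    LowerSemicontinuous fun p => (f p : EReal) * g p := by
  intro x y hy
  replace hy : y < (f x : EReal) * g x := hy
  have goalEq : ∀ᶠ x' in nhds x, y < (f x' : EReal) * g x' →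
      y < (fun p => (f p : EReal) * g p) x' := Filter.Eventually.of_forall fun _ h => h
  rcases lt_or_ge y 0 with hy0 | hy0
  · exact Eventually.of_forall fun x' =>
      hy0.trans_le (mul_nonneg (by exact_mod_cast hf0 x') (hg0 x'))
  obtain ⟨c, hc0, rfl⟩ : ∃ c : ℝ, 0 ≤ c ∧ y = (c : EReal) := by
    induction y using EReal.rec with
    | bot => exact absurd hy0 (by simp)
    | coe c => exact ⟨c, by exact_mod_cast hy0, rfl⟩
    | top => exact absurd hy (by simp)
  have hfx : 0 < f x := by
    rcases (hf0 x).lt_or_eq with h | h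
    · exact h
    · exfalso
      rw [← h, EReal.coe_zero, zero_mul] at hy
      exact absurd hy (by exact_mod_cast hc0.not_gt)
  -- generic final step
  have step : ∀ m' q' : ℝ, 0 ≤ m' → 0 ≤ q' → (c : ℝ) < m' * q' →
      (∀ᶠ x' in nhds x, m' < f x') → (∀ᶠ x' in nhds x, (q' : EReal) < g x') →
      ∀ᶠ x' in nhds x, (c : EReal) < (f x' : EReal) * g x' := by
    intro m' q' hm' hq' hlt h1 h2
    filter_upwards [h1, h2] with x' h1' h2'
    have e1 : ((m' * q' : ℝ) : EReal) ≤ (f x' : EReal) * g x' := by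
      rw [EReal.coe_mul]
      calc (m' : EReal) * (q' : EReal) ≤ (f x' : EReal) * (q' : EReal) := by
            exact mul_le_mul_of_nonneg_right (by exact_mod_cast h1'.le) (by exact_mod_cast hq')
        _ ≤ (f x' : EReal) * g x' := by
            exact mul_le_mul_of_nonneg_left h2'.le
              (by exact_mod_cast (hm'.trans h1'.le).trans (le_refl (f x')))
    exact lt_of_lt_of_le (by exact_mod_cast hlt) e1
  rcases eq_top_or_lt_top (g x) with htop | hlt
  · -- g x = ⊤
    have hq : (0:ℝ) < 2 * (c + 1) / f x := by positivity
    have h1 : ∀ᶠ x' in nhds x, f x / 2 < f x' :=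
      (hf.tendsto x).eventually (eventually_gt_nhds (half_lt_self hfx))
    have h2 : ∀ᶠ x' in nhds x, ((2 * (c + 1) / f x : ℝ) : EReal) < g x' :=
      hg x _ (by show _ < g x; rw [htop]; exact EReal.coe_lt_top _)
    refine step _ _ (by positivity) hq.le ?_ h1 h2
    have : f x / 2 * (2 * (c + 1) / f x) = c + 1 := by
      field_simp
    rw [this]; linarith
  · -- g x is real
    have hnb : g x ≠ ⊥ := fun hb => by
      have := hg0 x; rw [hb] at this; exact absurd this (by simp)
    have hGe : g x = ((g x).toReal : EReal) := (EReal.coe_toReal hlt.ne hnb).symm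
    set G : ℝ := (g x).toReal with hGdef
    have hG0 : 0 ≤ G := by
      have := hg0 x; rw [hGe] at this; exact_mod_cast this
    rw [hGe] at hy
    have hmG : (c : ℝ) < f x * G := by rw [← EReal.coe_mul] at hy; exact_mod_cast hy
    have hGpos : 0 < G := by
      rcases hG0.lt_or_eq with h | h
      · exact h
      · exfalso; rw [← h, mul_zero] at hmG; exact hc0.not_gt hmG
    obtain ⟨t, hct, htm⟩ := exists_between hmG
    have ht0 : 0 < t := lt_of_le_of_lt hc0 hct
    have hprod : 0 < f x * G := mul_pos hfx hGpos
    set s : ℝ := Real.sqrt (t / (f x * G)) with hs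
    have hs0 : 0 < s := Real.sqrt_pos.2 (by positivity)
    have hs1 : s < 1 := by
      rw [hs, show (1:ℝ) = Real.sqrt 1 by simp]
      exact Real.sqrt_lt_sqrt (by positivity) (by rw [div_lt_one hprod]; exact htm)
    have hkey : f x * s * (G * s) = t := by
      have hss : s * s = t / (f x * G) := Real.mul_self_sqrt (by positivity)
      have h2 : f x * s * (G * s) = f x * G * (s * s) := by ring
      rw [h2, hss, mul_comm, div_mul_cancel₀ t hprod.ne']
    have h1 : ∀ᶠ x' in nhds x, f x * s < f x' :=
      (hf.tendsto x).eventually (eventually_gt_nhds (by nlinarith))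
    have h2 : ∀ᶠ x' in nhds x, ((G * s : ℝ) : EReal) < g x' := by
      apply hg x
      rw [hGe]
      exact_mod_cast (by nlinarith : G * s < G)
    exact step _ _ (by positivity) (by positivity) (by rw [hkey]; exact hct) h1 h2

lemma lsc_sum_nonneg {ι : Type*} (s : Finset ι) (f : ι → α → EReal)
    (h : ∀ i ∈ s, LowerSemicontinuous (f i)) (h0 : ∀ i ∈ s, ∀ x, 0 ≤ f i x) :
    LowerSemicontinuous (fun x => ∑ i ∈ s, f i x) := by
  classical
  induction s using Finset.induction_on with
  | empty => simpa using (lowerSemicontinuous_const : LowerSemicontinuous fun _ : α => (0:EReal))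
  | @insert a s ha ih =>
    have hsum : LowerSemicontinuous fun x => ∑ i ∈ s, f i x :=
      ih (fun i hi => h i (Finset.mem_insert_of_mem hi))
        (fun i hi => h0 i (Finset.mem_insert_of_mem hi))
    have := (h a (Finset.mem_insert_self a s)).add' hsum ?cont
    · simpa [Finset.sum_insert ha] using this
    case cont =>
      intro x
      have h1 : (0:EReal) ≤ f a x := h0 a (Finset.mem_insert_self a s) x
      have h2 : (0:EReal) ≤ ∑ i ∈ s, f i x :=
        Finset.sum_nonneg fun i hi => h0 i (Finset.mem_insert_of_mem hi) x
      apply EReal.continuousAt_add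
      · exact Or.inr fun hb => by
          have hb' : ∑ i ∈ s, f i x = ⊥ := hb
          rw [hb'] at h2; exact absurd h2 (by simp)
      · exact Or.inl fun hb => by
          have hb' : f a x = ⊥ := hb
          rw [hb'] at h1; exact absurd h1 (by simp)


lemma lsc_add_nonneg {f g : α → EReal} (hf : LowerSemicontinuous f) (hg : LowerSemicontinuous g)
    (hf0 : ∀ x, 0 ≤ f x) (hg0 : ∀ x, 0 ≤ g x) :
    LowerSemicontinuous fun x => f x + g x := by
  refine hf.add' hg fun x => EReal.continuousAt_add ?_ ?_
  · exact Or.inr fun hb => by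
      have hb' : g x = ⊥ := hb
      have := hg0 x; rw [hb'] at this; exact absurd this (by simp)
  · exact Or.inl fun hb => by
      have hb' : f x = ⊥ := hb
      have := hf0 x; rw [hb'] at this; exact absurd this (by simp)

section Main

variable {d M : ℕ} (U : Fin M → Fin M → EReal) (I : Fin M → (Fin d → ℝ) → EReal)

/-- A modified cost function which is globally lower semicontinuous. -/
noncomputable def cost (σ : Equiv.Perm (Fin M)) (p : (Fin M → ℝ) × (Fin M → Fin d → ℝ)) : EReal :=
  (∑ i : Fin M, ∑ j : Fin M, if (j:ℕ) = (i:ℕ) + 1 then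
      ((max (∑ k ∈ Finset.univ.filter (fun k : Fin M => (k:ℕ) ≤ (i:ℕ)), p.1 k) 0 : ℝ) : EReal)
        * (-(U (σ i) (σ j)))
    else 0)
  + ∑ i : Fin M, ((max (p.1 i) 0 : ℝ) : EReal) * I (σ i) (p.2 i)

lemma route_nonneg (hU : ∀ i j, U i j ≤ 0) (σ : Equiv.Perm (Fin M))
    (p : (Fin M → ℝ) × (Fin M → Fin d → ℝ)) :
    0 ≤ (∑ i : Fin M, ∑ j : Fin M, if (j:ℕ) = (i:ℕ) + 1 then
      ((max (∑ k ∈ Finset.univ.filter (fun k : Fin M => (k:ℕ) ≤ (i:ℕ)), p.1 k) 0 : ℝ) : EReal)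
        * (-(U (σ i) (σ j)))
    else 0 : EReal) := by
  refine Finset.sum_nonneg fun i _ => Finset.sum_nonneg fun j _ => ?_
  split
  · exact mul_nonneg (by exact_mod_cast le_max_right _ _) (neg_nonneg_of_nonpos (hU _ _))
  · exact le_refl 0

lemma rest_nonneg (hInonneg : ∀ i x, 0 ≤ I i x) (σ : Equiv.Perm (Fin M))
    (p : (Fin M → ℝ) × (Fin M → Fin d → ℝ)) :
    0 ≤ (∑ i : Fin M, ((max (p.1 i) 0 : ℝ) : EReal) * I (σ i) (p.2 i)) :=
  Finset.sum_nonneg fun i _ =>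
    mul_nonneg (by exact_mod_cast le_max_right _ _) (hInonneg _ _)

lemma cost_nonneg (hU : ∀ i j, U i j ≤ 0) (hInonneg : ∀ i x, 0 ≤ I i x)
    (σ : Equiv.Perm (Fin M)) (p : (Fin M → ℝ) × (Fin M → Fin d → ℝ)) : 0 ≤ cost U I σ p :=
  add_nonneg (route_nonneg U hU σ p) (rest_nonneg I hInonneg σ p)

lemma cost_eq (hU : ∀ i j, U i j ≤ 0) (σ : Equiv.Perm (Fin M)) (v : Fin M → ℝ)
    (x : Fin M → Fin d → ℝ) (hv : ∀ i, 0 ≤ v i) :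
    -(∑ i : Fin M, ∑ j : Fin M,
            if (j:ℕ) = (i:ℕ) + 1 then
              ((∑ k ∈ Finset.univ.filter (fun k : Fin M => (k:ℕ) ≤ (i:ℕ)), v k : ℝ) : EReal)
                * U (σ i) (σ j)
            else 0)
        + ∑ i : Fin M, ((v i : ℝ) : EReal) * I (σ i) (x i) = cost U I σ (v, x) := by
  have hterm : ∀ i j : Fin M, (if (j:ℕ) = (i:ℕ) + 1 then
      ((∑ k ∈ Finset.univ.filter (fun k : Fin M => (k:ℕ) ≤ (i:ℕ)), v k : ℝ) : EReal)
        * U (σ i) (σ j) else 0) ≤ 0 := by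
    intro i j
    split
    · exact mul_nonpos_er (Finset.sum_nonneg fun k _ => hv k) (hU _ _)
    · exact le_refl 0
  unfold cost
  congr 1
  · rw [neg_sum_nonpos _ _ (fun i _ => Finset.sum_nonpos fun j _ => hterm i j)]
    refine Finset.sum_congr rfl fun i _ => ?_
    rw [neg_sum_nonpos _ _ (fun j _ => hterm i j)]
    refine Finset.sum_congr rfl fun j _ => ?_
    split
    · rw [max_eq_left (Finset.sum_nonneg fun k _ => hv k), coe_mul_neg]
    · exact neg_zero
  · exact Finset.sum_congr rfl fun i _ => by rw [max_eq_left (hv i)]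

lemma cost_lsc (hU : ∀ i j, U i j ≤ 0) (hInonneg : ∀ i x, 0 ≤ I i x)
    (hIlsc : ∀ i, LowerSemicontinuous (I i)) (σ : Equiv.Perm (Fin M)) :
    LowerSemicontinuous (cost U I σ) := by
  unfold cost
  apply lsc_add_nonneg
  · refine lsc_sum_nonneg Finset.univ _ (fun i _ => ?_) (fun i _ p =>
      Finset.sum_nonneg fun j _ => ?_)
    · refine lsc_sum_nonneg Finset.univ _ (fun j _ => ?_) (fun j _ p => ?_)
      · by_cases hc : (j:ℕ) = (i:ℕ) + 1
        · simp only [if_pos hc]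
          exact lsc_coe_mul
            ((continuous_finset_sum _ fun k _ => (continuous_apply k).comp continuous_fst).max
              continuous_const)
            (fun p => le_max_right _ _) lowerSemicontinuous_const
            (fun p => neg_nonneg_of_nonpos (hU _ _))
        · simp only [if_neg hc]
          exact lowerSemicontinuous_const
      · split
        · exact mul_nonneg (by exact_mod_cast le_max_right _ _)
            (neg_nonneg_of_nonpos (hU _ _))
        · exact le_refl 0
    · split
      · exact mul_nonneg (by exact_mod_cast le_max_right _ _)
          (neg_nonneg_of_nonpos (hU _ _))
      · exact le_refl 0
  · refine lsc_sum_nonneg Finset.univ _ (fun i _ => ?_) (fun i _ p =>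
      mul_nonneg (by exact_mod_cast le_max_right _ _) (hInonneg _ _))
    exact lsc_coe_mul (((continuous_apply i).comp continuous_fst).max continuous_const)
      (fun p => le_max_right _ _)
      (lsc_comp_continuous (hIlsc (σ i)) ((continuous_apply i).comp continuous_snd))
      (fun p => hInonneg _ _)
  · exact fun p => route_nonneg U hU σ p
  · exact fun p => rest_nonneg I hInonneg σ p

/-- the constraint set -/
def Cset (r : ℝ) (σ : Equiv.Perm (Fin M)) (b : ℝ) :
    Set ((Fin M → ℝ) × (Fin M → Fin d → ℝ)) :=
  {p | (∀ i, p.1 i ∈ Set.Icc (0:ℝ) 1) ∧ (∑ i, p.1 i) = 1 ∧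
    (∀ i, p.2 i ∈ {x : Fin d → ℝ | ∀ j, |x j| ≤ r}) ∧ cost U I σ p ≤ (b : EReal)}

lemma Kset_compact (r : ℝ) : IsCompact {x : Fin d → ℝ | ∀ j, |x j| ≤ r} := by
  have : {x : Fin d → ℝ | ∀ j, |x j| ≤ r} = Set.pi Set.univ (fun _ => Set.Icc (-r) r) := by
    ext x; simp only [Set.mem_setOf_eq, Set.mem_univ_pi, Set.mem_Icc, abs_le]
  rw [this]
  exact isCompact_univ_pi fun _ => isCompact_Icc

lemma Cset_compact (hU : ∀ i j, U i j ≤ 0) (hInonneg : ∀ i x, 0 ≤ I i x)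
    (hIlsc : ∀ i, LowerSemicontinuous (I i)) (r : ℝ) (σ : Equiv.Perm (Fin M)) (b : ℝ) :
    IsCompact (Cset U I r σ b) := by
  have hKc : IsCompact {x : Fin d → ℝ | ∀ j, |x j| ≤ r} := Kset_compact r
  have hbig : IsCompact ((Set.pi Set.univ fun _ : Fin M => Set.Icc (0:ℝ) 1) ×ˢ
      (Set.pi Set.univ fun _ : Fin M => {x : Fin d → ℝ | ∀ j, |x j| ≤ r})) :=
    (isCompact_univ_pi fun _ => isCompact_Icc).prod (isCompact_univ_pi fun _ => hKc)
  apply IsCompact.of_isClosed_subset hbig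
  · have hclosed : IsClosed (Cset U I r σ b) := by
      have h1 : IsClosed {p : (Fin M → ℝ) × (Fin M → Fin d → ℝ) |
          ∀ i, p.1 i ∈ Set.Icc (0:ℝ) 1} := by
        have : {p : (Fin M → ℝ) × (Fin M → Fin d → ℝ) | ∀ i, p.1 i ∈ Set.Icc (0:ℝ) 1}
            = ⋂ i, (fun p : (Fin M → ℝ) × (Fin M → Fin d → ℝ) => p.1 i) ⁻¹' Set.Icc (0:ℝ) 1 := by
          ext p; simp
        rw [this]
        exact isClosed_iInter fun i =>
          isClosed_Icc.preimage ((continuous_apply i).comp continuous_fst)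
      have h2 : IsClosed {p : (Fin M → ℝ) × (Fin M → Fin d → ℝ) | (∑ i, p.1 i) = 1} :=
        isClosed_eq (continuous_finset_sum _ fun i _ => (continuous_apply i).comp continuous_fst)
          continuous_const
      have h3 : IsClosed {p : (Fin M → ℝ) × (Fin M → Fin d → ℝ) |
          ∀ i, p.2 i ∈ {x : Fin d → ℝ | ∀ j, |x j| ≤ r}} := by
        have : {p : (Fin M → ℝ) × (Fin M → Fin d → ℝ) |
            ∀ i, p.2 i ∈ {x : Fin d → ℝ | ∀ j, |x j| ≤ r}}
            = ⋂ i, (fun p : (Fin M → ℝ) × (Fin M → Fin d → ℝ) => p.2 i) ⁻¹'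
                {x : Fin d → ℝ | ∀ j, |x j| ≤ r} := by
          ext p; simp
        rw [this]
        exact isClosed_iInter fun i =>
          hKc.isClosed.preimage ((continuous_apply i).comp continuous_snd)
      have h4 : IsClosed {p : (Fin M → ℝ) × (Fin M → Fin d → ℝ) |
          cost U I σ p ≤ (b : EReal)} := by
        have := lowerSemicontinuous_iff_isOpen_preimage.1 (cost_lsc U I hU hInonneg hIlsc σ)
          (b : EReal)
        simpa [Set.preimage, Set.compl_setOf, not_lt] using this.isClosed_compl
      have : Cset U I r σ b = ({p : (Fin M → ℝ) × (Fin M → Fin d → ℝ) |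
          ∀ i, p.1 i ∈ Set.Icc (0:ℝ) 1} ∩ {p | (∑ i, p.1 i) = 1} ∩
          ({p | ∀ i, p.2 i ∈ {x : Fin d → ℝ | ∀ j, |x j| ≤ r}} ∩
           {p | cost U I σ p ≤ (b : EReal)})) := by
        ext p
        simp only [Cset, Set.mem_setOf_eq, Set.mem_inter_iff]
        tauto
      rw [this]
      exact (h1.inter h2).inter (h3.inter h4)
    exact hclosed
  · rintro p ⟨hp1, _, hp3, _⟩
    exact ⟨fun i _ => hp1 i, fun i _ => hp3 i⟩

/-- the union over permutations of images of the constraint sets -/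
def Tset (r : ℝ) (b : ℝ) : Set (Fin d → ℝ) :=
  ⋃ σ : Equiv.Perm (Fin M), (fun p : (Fin M → ℝ) × (Fin M → Fin d → ℝ) =>
    ∑ i, p.1 i • p.2 i) '' Cset U I r σ b

lemma phi_continuous : Continuous (fun p : (Fin M → ℝ) × (Fin M → Fin d → ℝ) =>
    ∑ i, p.1 i • p.2 i) :=
  continuous_finset_sum _ fun i _ =>
    ((continuous_apply i).comp continuous_fst).smul ((continuous_apply i).comp continuous_snd)

lemma Tset_compact (hU : ∀ i j, U i j ≤ 0) (hInonneg : ∀ i x, 0 ≤ I i x)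
    (hIlsc : ∀ i, LowerSemicontinuous (I i)) (r : ℝ) (b : ℝ) :
    IsCompact (Tset U I r b) :=
  isCompact_iUnion fun σ =>
    (Cset_compact U I hU hInonneg hIlsc r σ b).image phi_continuous

lemma Tset_subK (r : ℝ) (b : ℝ) :
    Tset U I r b ⊆ {x : Fin d → ℝ | ∀ j, |x j| ≤ r} := by
  rintro z hz
  obtain ⟨σ, p, ⟨hv01, hv1, hxK, -⟩, hpz⟩ := Set.mem_iUnion.1 hz
  intro j
  have hzj : z j = ∑ i, p.1 i * p.2 i j := by
    rw [← hpz]; simp [Finset.sum_apply]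
  rw [hzj]
  calc |∑ i, p.1 i * p.2 i j| ≤ ∑ i, |p.1 i * p.2 i j| := Finset.abs_sum_le_sum_abs _ _
    _ ≤ ∑ i, p.1 i * r := by
        refine Finset.sum_le_sum fun i _ => ?_
        rw [abs_mul, abs_of_nonneg (hv01 i).1]
        exact mul_le_mul_of_nonneg_left (hxK i j) (hv01 i).1
    _ = r := by rw [← Finset.sum_mul, hv1, one_mul]

lemma mem_Tset_of_lt (hU : ∀ i j, U i j ≤ 0) (hInonneg : ∀ i x, 0 ≤ I i x) {r b : ℝ}
    (hQne : ∀ i, {x | I i x < ⊤}.Nonempty)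
    (hQsub : ∀ i, {x : Fin d → ℝ | I i x < ⊤} ⊆ {x : Fin d → ℝ | ∀ j, |x j| ≤ r})
    {z : Fin d → ℝ} (hz : JU d M U I z < (b : EReal)) :
    z ∈ Tset U I r b := by
  obtain ⟨c, hcS, hcb⟩ := sInf_lt_iff.1 hz
  obtain ⟨σ, v, x, hv01, hv1, hvx, rfl⟩ := hcS
  have hv0 : ∀ i, 0 ≤ v i := fun i => (hv01 i).1
  rw [cost_eq U I hU σ v x hv0] at hcb
  -- each rest term is finite
  have hrest_le : (∑ i : Fin M, ((max (v i) 0 : ℝ) : EReal) * I (σ i) (x i))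
      ≤ cost U I σ (v, x) := le_add_of_nonneg_left (route_nonneg U hU σ (v, x))
  have hterm : ∀ i : Fin M, ((max (v i) 0 : ℝ) : EReal) * I (σ i) (x i) < ⊤ := by
    intro i
    have hle : ((max (v i) 0 : ℝ) : EReal) * I (σ i) (x i)
        ≤ ∑ k : Fin M, ((max (v k) 0 : ℝ) : EReal) * I (σ k) (x k) :=
      Finset.single_le_sum (f := fun k => ((max (v k) 0 : ℝ) : EReal) * I (σ k) (x k))
        (fun k _ => mul_nonneg (by exact_mod_cast le_max_right _ _) (hInonneg _ _))
        (Finset.mem_univ i)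
    exact lt_of_le_of_lt (hle.trans (hrest_le.trans hcb.le)) (EReal.coe_lt_top b)
  classical
  set x' : Fin M → Fin d → ℝ := fun i => if 0 < v i then x i else (hQne (σ i)).choose with hx'
  have hIfin : ∀ i, 0 < v i → I (σ i) (x i) < ⊤ := by
    intro i hi
    by_contra htop
    rw [not_lt, top_le_iff] at htop
    have : ((max (v i) 0 : ℝ) : EReal) * I (σ i) (x i) = ⊤ := by
      rw [htop, max_eq_left (hv0 i)]
      exact EReal.coe_mul_top_of_pos hi
    have ht := hterm i
    rw [this] at ht
    exact absurd ht (lt_irrefl ⊤)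
  have hx'K : ∀ i, x' i ∈ {x : Fin d → ℝ | ∀ j, |x j| ≤ r} := by
    intro i
    by_cases hi : 0 < v i
    · simp only [hx', if_pos hi]
      exact hQsub (σ i) (hIfin i hi)
    · simp only [hx', if_neg hi]
      exact hQsub (σ i) (hQne (σ i)).choose_spec
  have hsum' : (∑ i, v i • x' i) = z := by
    rw [← hvx]
    refine Finset.sum_congr rfl fun i _ => ?_
    by_cases hi : 0 < v i
    · simp only [hx', if_pos hi]
    · have hvi : v i = 0 := le_antisymm (not_lt.1 hi) (hv0 i)
      rw [hvi, zero_smul, zero_smul]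
  have hcost' : cost U I σ (v, x') = cost U I σ (v, x) := by
    unfold cost
    congr 1
    refine Finset.sum_congr rfl fun i _ => ?_
    by_cases hi : 0 < v i
    · simp only [hx', if_pos hi]
    · have hvi : v i = 0 := le_antisymm (not_lt.1 hi) (hv0 i)
      simp only [hvi, max_self, EReal.coe_zero, zero_mul]
  refine Set.mem_iUnion.2 ⟨σ, ⟨(v, x'), ⟨hv01, hv1, hx'K, ?_⟩, hsum'⟩⟩
  rw [hcost']
  exact hcb.le

lemma JU_le_of_mem_Tset (hU : ∀ i j, U i j ≤ 0) {r : ℝ} {b : ℝ} {z : Fin d → ℝ}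
    (hz : z ∈ Tset U I r b) : JU d M U I z ≤ (b : EReal) := by
  obtain ⟨σ, p, ⟨hv01, hv1, -, hcb⟩, hpz⟩ := Set.mem_iUnion.1 hz
  refine le_trans (sInf_le ?_) hcb
  exact ⟨σ, p.1, p.2, hv01, hv1, hpz,
    (cost_eq U I hU σ p.1 p.2 (fun i => (hv01 i).1)).symm⟩

lemma JU_nonneg (hU : ∀ i j, U i j ≤ 0) (hInonneg : ∀ i x, 0 ≤ I i x) (z : Fin d → ℝ) :
    0 ≤ JU d M U I z := by
  refine le_sInf fun c hc => ?_
  obtain ⟨σ, v, x, hv01, hv1, hvx, rfl⟩ := hc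
  rw [cost_eq U I hU σ v x (fun i => (hv01 i).1)]
  exact cost_nonneg U I hU hInonneg σ (v, x)

lemma level_eq (hU : ∀ i j, U i j ≤ 0) (hInonneg : ∀ i x, 0 ≤ I i x) {r : ℝ} (a : ℝ)
    (hQne : ∀ i, {x | I i x < ⊤}.Nonempty)
    (hQsub : ∀ i, {x : Fin d → ℝ | I i x < ⊤} ⊆ {x : Fin d → ℝ | ∀ j, |x j| ≤ r}) :
    {z : Fin d → ℝ | JU d M U I z ≤ (a : EReal)} = ⋂ n : ℕ, Tset U I r (a + 1/(n+1)) := by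
  ext z
  simp only [Set.mem_setOf_eq, Set.mem_iInter]
  constructor
  · intro hz n
    refine mem_Tset_of_lt U I hU hInonneg hQne hQsub (lt_of_le_of_lt hz ?_)
    exact EReal.coe_lt_coe_iff.2 (lt_add_of_pos_right a (by positivity))
  · intro hz
    by_contra hlt
    rw [not_le] at hlt
    obtain ⟨c, hc1, hc2⟩ := EReal.lt_iff_exists_real_btwn.1 hlt
    have hac : a < c := by exact_mod_cast hc1
    obtain ⟨n, hn⟩ := exists_nat_one_div_lt (by linarith : (0:ℝ) < c - a)
    have h1 : JU d M U I z ≤ ((a + 1/(n+1) : ℝ) : EReal) :=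
      JU_le_of_mem_Tset U I hU (hz n)
    have h2 : ((a + 1/(n+1) : ℝ) : EReal) < (c : EReal) := by
      exact_mod_cast (by linarith : (a + 1/(n+1) : ℝ) < c)
    exact absurd (lt_of_le_of_lt (h1.trans h2.le) hc2) (lt_irrefl _)

end Main

end JUproof

theorem stmt12 (d M : ℕ) (hM : 1 ≤ M)
    (r : ℝ) (U : Fin M → Fin M → EReal) (hU : ∀ i j, U i j ≤ 0)
    (I : Fin M → (Fin d → ℝ) → EReal)
    (hInonneg : ∀ i x, 0 ≤ I i x)
    (hIlsc : ∀ i, LowerSemicontinuous (I i))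
    (hIgood : ∀ i, ∀ a : ℝ, IsCompact {x | I i x ≤ (a : EReal)})
    (hQne : ∀ i, {x | I i x < ⊤}.Nonempty)
    (hQcpt : ∀ i, IsCompact {x | I i x < ⊤})
    (hQsub : ∀ i, {x | I i x < ⊤} ⊆ {x : Fin d → ℝ | ∀ j, |x j| ≤ r}) :
    (∀ z, 0 ≤ JU d M U I z)
    ∧ LowerSemicontinuous (JU d M U I)
    ∧ (∀ a : ℝ, IsCompact {z | JU d M U I z ≤ (a : EReal)})
    ∧ (∀ z, ∀ i, JU d M U I z ≤ I i z)
    ∧ {z | JU d M U I z < ⊤} ⊆ {x : Fin d → ℝ | ∀ j, |x j| ≤ r} := by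
  classical
  have part1 : ∀ z, 0 ≤ JU d M U I z := fun z => JUproof.JU_nonneg U I hU hInonneg z
  have part3 : ∀ a : ℝ, IsCompact {z | JU d M U I z ≤ (a : EReal)} := by
    intro a
    rw [JUproof.level_eq U I hU hInonneg a hQne hQsub]
    exact IsCompact.of_isClosed_subset (JUproof.Tset_compact U I hU hInonneg hIlsc r _)
      (isClosed_iInter fun n => (JUproof.Tset_compact U I hU hInonneg hIlsc r _).isClosed)
      (Set.iInter_subset _ 0)
  have part2 : LowerSemicontinuous (JU d M U I) := by
    rw [lowerSemicontinuous_iff_isOpen_preimage]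
    intro y
    have hpre : JU d M U I ⁻¹' Set.Ioi y = {z | JU d M U I z ≤ y}ᶜ := by
      ext z; simp [not_le]
    rw [hpre, isOpen_compl_iff]
    induction y using EReal.rec with
    | bot =>
      have he : {z : Fin d → ℝ | JU d M U I z ≤ ⊥} = ∅ := by
        ext z
        simp only [Set.mem_setOf_eq, Set.mem_empty_iff_false, iff_false]
        intro h
        exact absurd ((part1 z).trans h) (by simp)
      rw [he]; exact isClosed_empty
    | coe a => exact (part3 a).isClosed
    | top =>
      have he : {z : Fin d → ℝ | JU d M U I z ≤ ⊤} = Set.univ := by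
        ext z; simp
      rw [he]; exact isClosed_univ
  have part4 : ∀ z, ∀ i, JU d M U I z ≤ I i z := by
    intro z i
    have hL : M - 1 < M := by omega
    set L : Fin M := ⟨M - 1, hL⟩ with hLdef
    set σ : Equiv.Perm (Fin M) := Equiv.swap L i with hσ
    set v : Fin M → ℝ := fun k => if k = L then 1 else 0 with hv
    have hroute : (∑ i' : Fin M, ∑ j : Fin M,
        if (j:ℕ) = (i':ℕ) + 1 then
          ((∑ k ∈ Finset.univ.filter (fun k : Fin M => (k:ℕ) ≤ (i':ℕ)), v k : ℝ) : EReal)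
            * U (σ i') (σ j)
        else 0) = 0 := by
      refine Finset.sum_eq_zero fun i' _ => Finset.sum_eq_zero fun j _ => ?_
      split
      case isTrue hij =>
        have hjM : (j:ℕ) < M := j.isLt
        have hsum0 : (∑ k ∈ Finset.univ.filter (fun k : Fin M => (k:ℕ) ≤ (i':ℕ)), v k) = 0 := by
          refine Finset.sum_eq_zero fun k hk => ?_
          have hk' : (k:ℕ) ≤ (i':ℕ) := (Finset.mem_filter.1 hk).2
          have hkL : k ≠ L := by
            intro h
            subst h
            have hLval : (L:ℕ) = M - 1 := rfl
            omega
          simp [hv, hkL]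
        rw [hsum0]
        simp
      case isFalse _ => rfl
    refine sInf_le ?_
    refine ⟨σ, v, fun _ => z, ?_, ?_, ?_, ?_⟩
    · intro k; by_cases h : k = L <;> simp [hv, h]
    · simp [hv]
    · have hvz : ∀ k : Fin M, v k • z = if k = L then z else 0 := by
        intro k; by_cases h : k = L <;> simp [hv, h]
      simp [hvz]
    · rw [hroute, neg_zero, zero_add]
      rw [Finset.sum_eq_single L (fun k _ hk => by simp [hv, hk])
        (fun h => absurd (Finset.mem_univ L) h)]
      simp [hv, hσ, Equiv.swap_apply_left]
  have part5 : {z | JU d M U I z < ⊤} ⊆ {x : Fin d → ℝ | ∀ j, |x j| ≤ r} := by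
    intro z hz
    obtain ⟨b, hb1, -⟩ := EReal.lt_iff_exists_real_btwn.1 hz
    exact JUproof.Tset_subK U I r b
      (JUproof.mem_Tset_of_lt U I hU hInonneg hQne hQsub hb1)
  exact ⟨part1, part2, part3, part4, part5⟩
end

section
/- Let (t_n) ⊂ [0,1] and suppose limsup_n (1/n) log t_n = t with −∞ < t < 0 and t_n > 0 for infinitely many n (and t_n not eventually 0). Define a_n = sup_{j ≥ n} (1/j) log t_j and t̂_n = exp( sup_{l ≥ n} l·a_l ). Then t̂_n ∈ (0,1], t̂_n ≥ t_n, t̂_n is nonincreasing, and (1/n) log t̂_n → t. -/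
open Filter Topology

/-- `aSeq t n = sup_{j ≥ n, j ≥ 1} (1/j) log t_j` in the extended reals. -/
noncomputable def aSeq (t : ℕ → ℝ) (n : ℕ) : EReal :=
  ⨆ j : ℕ, ⨆ (_ : 1 ≤ j ∧ n ≤ j), ((1 / (j:ℝ) : ℝ) : EReal) * elog (t j)

/-- `tHat t n = exp( sup_{l ≥ n, l ≥ 1} l · aSeq t l )`. -/
noncomputable def tHat (t : ℕ → ℝ) (n : ℕ) : ℝ :=
  Real.exp ((⨆ l : ℕ, ⨆ (_ : 1 ≤ l ∧ n ≤ l), ((l:ℝ) : EReal) * aSeq t l).toReal)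

section aux
variable (t : ℕ → ℝ)

noncomputable def Sn (n : ℕ) : EReal :=
  ⨆ l : ℕ, ⨆ (_ : 1 ≤ l ∧ n ≤ l), ((l:ℝ) : EReal) * aSeq t l

theorem tHat_eq (n : ℕ) : tHat t n = Real.exp ((Sn t n).toReal) := rfl

theorem elog_nonpos_s16 (ht : ∀ n, t n ∈ Set.Icc (0:ℝ) 1) (j : ℕ) : elog (t j) ≤ 0 := by
  unfold elog
  split
  · exact bot_le
  · next h =>
    have h0 : 0 ≤ t j := (ht j).1
    have h1 : t j ≤ 1 := (ht j).2
    exact_mod_cast Real.log_nonpos h0 h1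

theorem b_nonpos (ht : ∀ n, t n ∈ Set.Icc (0:ℝ) 1) (j : ℕ) :
    ((1 / (j:ℝ) : ℝ) : EReal) * elog (t j) ≤ 0 := by
  have hc : (0:EReal) ≤ ((1 / (j:ℝ) : ℝ) : EReal) := by
    exact_mod_cast (by positivity : (0:ℝ) ≤ 1 / (j:ℝ))
  calc ((1 / (j:ℝ) : ℝ) : EReal) * elog (t j)
      ≤ ((1 / (j:ℝ) : ℝ) : EReal) * 0 := mul_le_mul_of_nonneg_left (elog_nonpos_s16 t ht j) hc
    _ = 0 := mul_zero _

theorem aSeq_nonpos (ht : ∀ n, t n ∈ Set.Icc (0:ℝ) 1) (n : ℕ) : aSeq t n ≤ 0 :=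
  iSup₂_le fun j _ => b_nonpos t ht j

end aux

section aux2
variable (t : ℕ → ℝ) (tt : ℝ)

theorem tt_le_aSeq
    (hlimsup : Filter.limsup (fun n : ℕ => ((1 / (n:ℝ) : ℝ) : EReal) * elog (t n)) atTop
        = (tt : EReal)) (n : ℕ) : (tt : EReal) ≤ aSeq t n := by
  have h : (tt : EReal) = ⨅ m, ⨆ j : ℕ, ⨆ (_ : j ≥ m), ((1 / (j:ℝ) : ℝ) : EReal) * elog (t j) := by
    rw [← hlimsup, limsup_eq_iInf_iSup_of_nat]
  calc (tt : EReal) ≤ ⨆ j : ℕ, ⨆ (_ : j ≥ max 1 n), ((1 / (j:ℝ) : ℝ) : EReal) * elog (t j) :=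
        h ▸ iInf_le _ (max 1 n)
    _ ≤ aSeq t n := iSup₂_le fun j hj =>
        le_iSup₂_of_le j ⟨le_of_max_le_left hj, le_of_max_le_right hj⟩ le_rfl

theorem Sn_nonpos (ht : ∀ n, t n ∈ Set.Icc (0:ℝ) 1) (n : ℕ) : Sn t n ≤ 0 := by
  refine iSup₂_le fun l _ => ?_
  have hc : (0:EReal) ≤ ((l:ℝ) : EReal) := by exact_mod_cast (l:ℕ).cast_nonneg
  calc ((l:ℝ) : EReal) * aSeq t l ≤ ((l:ℝ) : EReal) * 0 :=
        mul_le_mul_of_nonneg_left (aSeq_nonpos t ht l) hc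
    _ = 0 := mul_zero _

end aux2

section aux3
variable (t : ℕ → ℝ) (tt : ℝ)

theorem ntt_le_Sn
    (hlimsup : Filter.limsup (fun n : ℕ => ((1 / (n:ℝ) : ℝ) : EReal) * elog (t n)) atTop
        = (tt : EReal)) {n : ℕ} (hn : 1 ≤ n) : (((n:ℝ) * tt : ℝ) : EReal) ≤ Sn t n := by
  have hc : (0:EReal) ≤ ((n:ℝ) : EReal) := by exact_mod_cast (n:ℕ).cast_nonneg
  calc (((n:ℝ) * tt : ℝ) : EReal) = ((n:ℝ) : EReal) * ((tt:ℝ) : EReal) := EReal.coe_mul _ _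
    _ ≤ ((n:ℝ) : EReal) * aSeq t n :=
        mul_le_mul_of_nonneg_left (tt_le_aSeq t tt hlimsup n) hc
    _ ≤ Sn t n := le_iSup₂_of_le n ⟨hn, le_rfl⟩ le_rfl

theorem Sn_ne_bot
    (hlimsup : Filter.limsup (fun n : ℕ => ((1 / (n:ℝ) : ℝ) : EReal) * elog (t n)) atTop
        = (tt : EReal)) (n : ℕ) : Sn t n ≠ ⊥ := by
  have h1 : (1:ℕ) ≤ max 1 n := le_max_left _ _
  have h := ntt_le_Sn t tt hlimsup h1
  have hmono : Sn t (max 1 n) ≤ Sn t n := iSup₂_le fun l hl =>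
    le_iSup₂_of_le l ⟨hl.1, (le_max_right 1 n).trans hl.2⟩ le_rfl
  intro hbot
  rw [hbot] at hmono
  exact (EReal.coe_ne_bot _) (le_bot_iff.1 (h.trans hmono))

theorem Sn_ne_top (ht : ∀ n, t n ∈ Set.Icc (0:ℝ) 1) (n : ℕ) : Sn t n ≠ ⊤ :=
  fun htop => by simpa [htop] using Sn_nonpos t ht n

theorem Sn_antitone {n m : ℕ} (hnm : n ≤ m) : Sn t m ≤ Sn t n :=
  iSup₂_le fun l hl => le_iSup₂_of_le l ⟨hl.1, hnm.trans hl.2⟩ le_rfl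

theorem log_le_Sn (ht : ∀ n, t n ∈ Set.Icc (0:ℝ) 1) {n : ℕ} (hn : 1 ≤ n) (hpos : 0 < t n) :
    ((Real.log (t n) : ℝ) : EReal) ≤ Sn t n := by
  have hne : (n:ℝ) ≠ 0 := Nat.cast_ne_zero.2 (by omega)
  have helog : elog (t n) = ((Real.log (t n) : ℝ) : EReal) := if_neg (not_le.2 hpos)
  have hb : ((1 / (n:ℝ) : ℝ) : EReal) * elog (t n) ≤ aSeq t n :=
    le_iSup₂_of_le n ⟨hn, le_rfl⟩ le_rfl
  have hc : (0:EReal) ≤ ((n:ℝ) : EReal) := by exact_mod_cast (n:ℕ).cast_nonneg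
  calc ((Real.log (t n) : ℝ) : EReal)
      = ((n:ℝ) : EReal) * (((1 / (n:ℝ)) * Real.log (t n) : ℝ) : EReal) := by
        rw [← EReal.coe_mul]
        congr 1
        field_simp
    _ = ((n:ℝ) : EReal) * (((1 / (n:ℝ) : ℝ) : EReal) * elog (t n)) := by
        rw [helog, ← EReal.coe_mul]; exact EReal.coe_mul _ _
    _ ≤ ((n:ℝ) : EReal) * aSeq t n := mul_le_mul_of_nonneg_left hb hc
    _ ≤ Sn t n := le_iSup₂_of_le n ⟨hn, le_rfl⟩ le_rfl

end aux3

theorem stmt16 (t : ℕ → ℝ) (ht : ∀ n, t n ∈ Set.Icc (0:ℝ) 1)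
    (tt : ℝ) (htt : tt < 0)
    (hlimsup : Filter.limsup (fun n : ℕ => ((1 / (n:ℝ) : ℝ) : EReal) * elog (t n)) atTop
        = (tt : EReal))
    (hfreq : ∃ᶠ n in atTop, 0 < t n) :
    (∀ n, 1 ≤ n → tHat t n ∈ Set.Ioc (0:ℝ) 1 ∧ t n ≤ tHat t n)
    ∧ AntitoneOn (tHat t) (Set.Ici 1)
    ∧ Tendsto (fun n : ℕ => (1 / (n:ℝ)) * Real.log (tHat t n)) atTop (nhds tt) := by
  have hSb := Sn_ne_bot t tt hlimsup
  have hSt := Sn_ne_top t ht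
  have hS0 : ∀ n, (Sn t n).toReal ≤ 0 := fun n => by
    have := EReal.toReal_le_toReal (Sn_nonpos t ht n) (hSb n) (by simp)
    simpa using this
  refine ⟨?_, ?_, ?_⟩
  · intro n hn
    refine ⟨⟨Real.exp_pos _, ?_⟩, ?_⟩
    · rw [tHat_eq]
      calc Real.exp ((Sn t n).toReal) ≤ Real.exp 0 := Real.exp_le_exp.2 (hS0 n)
        _ = 1 := Real.exp_zero
    · rcases eq_or_lt_of_le (ht n).1 with h|h
      · rw [← h]; exact (Real.exp_pos _).le
      · have hlog := log_le_Sn t ht hn h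
        have h2 : Real.log (t n) ≤ (Sn t n).toReal := by
          exact_mod_cast hlog.trans (EReal.le_coe_toReal (hSt n))
        calc t n = Real.exp (Real.log (t n)) := (Real.exp_log h).symm
          _ ≤ tHat t n := by rw [tHat_eq]; exact Real.exp_le_exp.2 h2
  · intro n hn m hm hnm
    rw [tHat_eq, tHat_eq]
    exact Real.exp_le_exp.2 (EReal.toReal_le_toReal (Sn_antitone t hnm) (hSb m) (hSt n))
  · have hf : ∀ n : ℕ, (1/(n:ℝ)) * Real.log (tHat t n) = (1/(n:ℝ)) * (Sn t n).toReal :=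
      fun n => by rw [tHat_eq, Real.log_exp]
    have hlow : ∀ᶠ n : ℕ in atTop, tt ≤ (1/(n:ℝ)) * Real.log (tHat t n) := by
      filter_upwards [eventually_ge_atTop 1] with n hn
      rw [hf n]
      have h1 : ((n:ℝ)*tt : ℝ) ≤ (Sn t n).toReal := by
        have := EReal.toReal_le_toReal (ntt_le_Sn t tt hlimsup hn) (EReal.coe_ne_bot _) (hSt n)
        rwa [EReal.toReal_coe] at this
      have hnpos : (0:ℝ) < n := by exact_mod_cast hn
      calc tt = (1/(n:ℝ)) * ((n:ℝ)*tt) := by field_simp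
        _ ≤ (1/(n:ℝ)) * (Sn t n).toReal := mul_le_mul_of_nonneg_left h1 (by positivity)
    rw [tendsto_order]
    constructor
    · intro a ha
      filter_upwards [hlow] with n hn
      exact ha.trans_le hn
    · intro a ha
      set c := min ((tt+a)/2) (tt/2) with hc
      have hcneg : c < 0 := lt_of_le_of_lt (min_le_right _ _) (by linarith)
      have htc : tt < c := lt_min (by linarith) (by linarith)
      have hca : c < a := lt_of_le_of_lt (min_le_left _ _) (by linarith)
      have hev : ∀ᶠ j : ℕ in atTop, ((1/(j:ℝ):ℝ):EReal) * elog (t j) < (c:EReal) := by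
        apply eventually_lt_of_limsup_lt
        · rw [hlimsup]
          exact_mod_cast htc
        · exact ⟨⊤, Filter.Eventually.of_forall fun _ => le_top⟩
      rcases (eventually_atTop.1 hev) with ⟨N, hN⟩
      filter_upwards [eventually_ge_atTop (max N 1)] with n hn
      have hn1 : 1 ≤ n := le_trans (le_max_right N 1) hn
      have hnN : N ≤ n := le_trans (le_max_left N 1) hn
      have ha1 : ∀ l, n ≤ l → aSeq t l ≤ (c:EReal) := fun l hl =>
        iSup₂_le fun j hj => (hN j (hnN.trans (hl.trans hj.2))).le
      have hSc : Sn t n ≤ (((n:ℝ)*c : ℝ) : EReal) := by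
        refine iSup₂_le fun l hl => ?_
        have hc0 : (0:EReal) ≤ ((l:ℝ):EReal) := by exact_mod_cast (l:ℕ).cast_nonneg
        calc ((l:ℝ):EReal) * aSeq t l ≤ ((l:ℝ):EReal) * (c:EReal) :=
              mul_le_mul_of_nonneg_left (ha1 l hl.2) hc0
          _ = (((l:ℝ)*c : ℝ):EReal) := (EReal.coe_mul _ _).symm
          _ ≤ (((n:ℝ)*c : ℝ):EReal) := by
              refine EReal.coe_le_coe_iff.2 (mul_le_mul_of_nonpos_right ?_ hcneg.le)
              exact_mod_cast hl.2
      have h2 : (Sn t n).toReal ≤ (n:ℝ)*c := by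
        have := EReal.toReal_le_toReal hSc (hSb n) (EReal.coe_ne_top _)
        rwa [EReal.toReal_coe] at this
      rw [hf n]
      have hnpos : (0:ℝ) < n := by exact_mod_cast hn1
      calc (1/(n:ℝ)) * (Sn t n).toReal ≤ (1/(n:ℝ)) * ((n:ℝ)*c) :=
            mul_le_mul_of_nonneg_left h2 (by positivity)
        _ = c := by field_simp
        _ < a := hca
end

section
/- Consider Σ = {0,1}, f(0) = 1, f(1) = 0, initial distribution π = (1/2, 1/2), and the nonhomogeneous Markov chain with transition matrices P_n equal to A_n for n even and B_n for n odd, where A_k = [[1−2^{−k}, 2^{−k}],[0,1]] and B_k = [[1−3^{−k}, 3^{−k}],[0,1]]. Let Z_n = (1/n) Σ_{i=1}^n f(X_i). Then for every interval Γ = (a,b] with 0 < a < b < 1, lim_{n→∞} (1/n) log P_π(Z_n ∈ Γ) = −a log 2. -/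
open Filter Topology
open scoped Classical

/-- `alp k` is `2^{-k}` for `k` even and `3^{-k}` for `k` odd. -/
noncomputable def alp (k : ℕ) : ℝ := if Even k then (1/2 : ℝ) ^ k else (1/3 : ℝ) ^ k

/-- The time-`k` transition matrix on `{0,1}`: `[[1 - alp k, alp k], [0, 1]]`. -/
noncomputable def Pm (k : ℕ) : Fin 2 → Fin 2 → ℝ := fun s t =>
  if s = 1 then (if t = 1 then 1 else 0)
  else if t = 0 then 1 - alp k else alp k

/-- Weight of the path `ω = (X₀, X₁, …, X_n)` under the uniform initial distribution
`π = (1/2, 1/2)` and transition matrices `Pm 1, …, Pm n`. -/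
noncomputable def wt (n : ℕ) (ω : Fin (n+1) → Fin 2) : ℝ :=
  (1/2 : ℝ) * ∏ i : Fin n, Pm ((i : ℕ) + 1) (ω i.castSucc) (ω i.succ)

/-- The empirical average `Z_n = (1/n) ∑_{i=1}^n f(X_i)` with `f 0 = 1`, `f 1 = 0`. -/
noncomputable def Zn (n : ℕ) (ω : Fin (n+1) → Fin 2) : ℝ :=
  (1 / (n:ℝ)) * ∑ i : Fin n, (if ω i.succ = 0 then (1:ℝ) else 0)

/-- The probability `P_π(Z_n ∈ Γ)`, as a sum of path weights. -/
noncomputable def muZ (n : ℕ) (Γ : Set ℝ) : ℝ :=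
  ∑ ω ∈ Finset.univ.filter (fun ω : Fin (n+1) → Fin 2 => Zn n ω ∈ Γ), wt n ω

lemma alp_pos (k : ℕ) : 0 < alp k := by
  unfold alp; split <;> positivity

lemma alp_le (k : ℕ) : alp k ≤ (1/2:ℝ)^k := by
  unfold alp; split
  · exact le_refl _
  · exact pow_le_pow_left₀ (by norm_num) (by norm_num) k

lemma Pm_nonneg (k : ℕ) (s t : Fin 2) : 0 ≤ Pm k s t := by
  unfold Pm
  have h1 := alp_pos k
  have h2 := alp_le k
  have : (1/2:ℝ)^k ≤ 1 := by
    apply pow_le_one₀ <;> norm_num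
  split <;> split <;> simp <;> linarith

lemma Pm_le_one (k : ℕ) (s t : Fin 2) : Pm k s t ≤ 1 := by
  unfold Pm
  have h1 := alp_pos k
  have h2 := alp_le k
  have : (1/2:ℝ)^k ≤ 1 := by
    apply pow_le_one₀ <;> norm_num
  split <;> split <;> simp <;> linarith

noncomputable def pathJ (n j : ℕ) : Fin (n+1) → Fin 2 := fun i => if (i : ℕ) < j then 0 else 1

noncomputable def Z0 {n : ℕ} (ω : Fin (n+1) → Fin 2) : ℕ :=
  (Finset.univ.filter (fun i => ω i = 0)).card

lemma fin2_cases (x : Fin 2) (h : x ≠ 1) : x = 0 := by omega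
lemma fin2_cases' (x : Fin 2) (h : x ≠ 0) : x = 1 := by omega

lemma prod_nonneg' (n : ℕ) (ω : Fin (n+1) → Fin 2) :
    0 ≤ ∏ i : Fin n, Pm ((i : ℕ) + 1) (ω i.castSucc) (ω i.succ) :=
  Finset.prod_nonneg fun i _ => Pm_nonneg _ _ _

lemma wt_nonneg (n : ℕ) (ω : Fin (n+1) → Fin 2) : 0 ≤ wt n ω := by
  unfold wt
  have := prod_nonneg' n ω
  linarith

lemma wt_le_factor (n : ℕ) (ω : Fin (n+1) → Fin 2) (i0 : Fin n) :
    wt n ω ≤ Pm ((i0 : ℕ) + 1) (ω i0.castSucc) (ω i0.succ) := by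
  unfold wt
  set f : Fin n → ℝ := fun i => Pm ((i : ℕ) + 1) (ω i.castSucc) (ω i.succ) with hf
  have h1 : ∏ i : Fin n, f i = f i0 * ∏ i ∈ Finset.univ.erase i0, f i :=
    (Finset.mul_prod_erase _ _ (Finset.mem_univ i0)).symm
  have h2 : ∏ i ∈ Finset.univ.erase i0, f i ≤ 1 :=
    Finset.prod_le_one (fun i _ => Pm_nonneg _ _ _) (fun i _ => Pm_le_one _ _ _)
  have h0 : 0 ≤ f i0 := Pm_nonneg _ _ _
  calc (1/2:ℝ) * ∏ i : Fin n, f i ≤ 1 * ∏ i : Fin n, f i := by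
        apply mul_le_mul_of_nonneg_right (by norm_num)
        exact Finset.prod_nonneg fun i _ => Pm_nonneg _ _ _
    _ = f i0 * ∏ i ∈ Finset.univ.erase i0, f i := by rw [one_mul, h1]
    _ ≤ f i0 * 1 := mul_le_mul_of_nonneg_left h2 h0
    _ = f i0 := mul_one _

lemma no_descent {n : ℕ} {ω : Fin (n+1) → Fin 2} (h : wt n ω ≠ 0) (i : Fin n)
    (h1 : ω i.castSucc = 1) : ω i.succ = 1 := by
  by_contra hc
  have h0 : ω i.succ = 0 := fin2_cases _ hc
  apply h
  unfold wt
  rw [Finset.prod_eq_zero (Finset.mem_univ i) (by simp [h1, h0, Pm]), mul_zero]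

lemma propagate {n : ℕ} {ω : Fin (n+1) → Fin 2} (h : wt n ω ≠ 0) :
    ∀ d p (hp : p + d < n + 1), ω ⟨p, by omega⟩ = 1 → ω ⟨p + d, hp⟩ = 1 := by
  intro d
  induction d with
  | zero => intro p hp h1; simpa using h1
  | succ d ih =>
    intro p hp h1
    have hpd : p + d < n + 1 := by omega
    have h2 : ω ⟨p + d, hpd⟩ = 1 := ih p hpd h1
    have hd : p + d < n := by omega
    have := no_descent h ⟨p + d, hd⟩ (by
      have : (⟨p + d, hd⟩ : Fin n).castSucc = ⟨p + d, hpd⟩ := rfl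
      rw [this]; exact h2)
    have hs : (⟨p + d, hd⟩ : Fin n).succ = ⟨p + (d+1), hp⟩ := by
      apply Fin.ext; simp [Fin.val_succ]; omega
    rwa [hs] at this

lemma propagate' {n : ℕ} {ω : Fin (n+1) → Fin 2} (h : wt n ω ≠ 0) (i i' : Fin (n+1))
    (hle : i ≤ i') (h1 : ω i = 1) : ω i' = 1 := by
  have := propagate h ((i':ℕ) - (i:ℕ)) (i:ℕ) (by omega) (by simpa using h1)
  have he : (⟨(i:ℕ) + ((i':ℕ) - (i:ℕ)), by omega⟩ : Fin (n+1)) = i' := by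
    apply Fin.ext; simp; omega
  rwa [he] at this

lemma classify {n : ℕ} {ω : Fin (n+1) → Fin 2} (h : wt n ω ≠ 0) :
    ω = pathJ n (Z0 ω) := by
  funext i
  by_cases hi : ω i = 1
  · have hsub : Finset.univ.filter (fun i' => ω i' = 0) ⊆ Finset.Iio i := by
      intro i' hi'
      simp only [Finset.mem_filter] at hi'
      rw [Finset.mem_Iio]
      by_contra hge
      push_neg at hge
      have := propagate' h i i' hge hi
      rw [hi'.2] at this; exact absurd this (by decide)
    have hcard : Z0 ω ≤ (i:ℕ) := by
      have := Finset.card_le_card hsub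
      rwa [Fin.card_Iio] at this
    simp only [pathJ]
    rw [if_neg (by omega), hi]
  · have h0 : ω i = 0 := fin2_cases _ hi
    have hsub : Finset.Iic i ⊆ Finset.univ.filter (fun i' => ω i' = 0) := by
      intro i' hi'
      rw [Finset.mem_Iic] at hi'
      simp only [Finset.mem_filter, Finset.mem_univ, true_and]
      by_contra hne
      have h1 : ω i' = 1 := fin2_cases' _ hne
      have := propagate' h i' i hi' h1
      rw [h0] at this; exact absurd this (by decide)
    have hcard : (i:ℕ) + 1 ≤ Z0 ω := by
      have := Finset.card_le_card hsub
      rwa [Fin.card_Iic] at this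
    simp only [pathJ]
    rw [if_pos (by omega), h0]

lemma Zn_pathJ (n j : ℕ) (h1 : 1 ≤ j) (h2 : j ≤ n + 1) :
    Zn n (pathJ n j) = (1 / (n:ℝ)) * ((j:ℝ) - 1) := by
  unfold Zn
  congr 1
  have hstep : ∀ i : Fin n, (if pathJ n j i.succ = 0 then (1:ℝ) else 0)
      = (if (i:ℕ) + 1 < j then (1:ℝ) else 0) := by
    intro i
    by_cases hc : (i:ℕ) + 1 < j
    · simp [pathJ, Fin.val_succ, hc]
    · simp [pathJ, Fin.val_succ, hc]
  rw [Finset.sum_congr rfl (fun i _ => hstep i)]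
  rw [Fin.sum_univ_eq_sum_range (fun i => if i + 1 < j then (1:ℝ) else 0)]
  rw [← Finset.sum_filter]
  have hfe : (Finset.range n).filter (fun i => i + 1 < j) = Finset.range (j - 1) := by
    ext x; simp; omega
  rw [hfe]
  simp
  push_cast [h1]
  ring

lemma pathJ_factor (n j : ℕ) (i : Fin n) :
    Pm ((i:ℕ)+1) (pathJ n j i.castSucc) (pathJ n j i.succ) =
      if (i:ℕ) + 1 < j then 1 - alp ((i:ℕ)+1)
      else if (i:ℕ) + 1 = j then alp ((i:ℕ)+1)
      else 1 := by
  have hc : ((i.castSucc : Fin (n+1)) : ℕ) = (i:ℕ) := rfl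
  have hs : ((i.succ : Fin (n+1)) : ℕ) = (i:ℕ) + 1 := rfl
  by_cases h1 : (i:ℕ) + 1 < j
  · simp [pathJ, Pm, hc, hs, h1, show (i:ℕ) < j by omega]
  · by_cases h2 : (i:ℕ) + 1 = j
    · simp [pathJ, Pm, hc, hs, h1, h2, show (i:ℕ) < j by omega]
    · simp [pathJ, Pm, hc, hs, h1, h2, show ¬((i:ℕ) < j) by omega]

lemma wt_pathJ_le (n j : ℕ) (h1 : 1 ≤ j) (h2 : j ≤ n) :
    wt n (pathJ n j) ≤ alp j := by
  have hlt : j - 1 < n := by omega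
  have := wt_le_factor n (pathJ n j) ⟨j - 1, hlt⟩
  rw [pathJ_factor] at this
  simp only at this
  have he : (j - 1) + 1 = j := by omega
  rw [if_neg (by omega), if_pos he, he] at this
  exact this

lemma one_sub_ge_exp {x : ℝ} (h0 : 0 ≤ x) (h1 : x ≤ 1/2) :
    Real.exp (-(2*x)) ≤ 1 - x := by
  have he : 1 + 2*x ≤ Real.exp (2*x) := by
    have := Real.add_one_le_exp (2*x); linarith
  have hp : (0:ℝ) < Real.exp (2*x) := Real.exp_pos _
  rw [Real.exp_neg]
  rw [inv_le_iff_one_le_mul₀ hp]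
  nlinarith

lemma wt_pathJ_ge (n j : ℕ) (h1 : 1 ≤ j) (h2 : j ≤ n) (hev : Even j) :
    Real.exp (-2) * (1/2:ℝ) * (1/2:ℝ)^j ≤ wt n (pathJ n j) := by
  have hlt : j - 1 < n := by omega
  set i0 : Fin n := ⟨j - 1, hlt⟩ with hi0
  set f : Fin n → ℝ := fun i => Pm ((i:ℕ)+1) (pathJ n j i.castSucc) (pathJ n j i.succ) with hf
  set g : Fin n → ℝ := fun i =>
    (if i = i0 then (1/2:ℝ)^j else 1) * Real.exp (-(2 * (1/2:ℝ)^((i:ℕ)+1))) with hg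
  have hgf : ∀ i ∈ Finset.univ, g i ≤ f i := by
    intro i _
    rw [hf]
    simp only
    rw [pathJ_factor]
    by_cases hii : i = i0
    · have hv : (i:ℕ) = j - 1 := by rw [hii]
      have hvj : (i:ℕ) + 1 = j := by omega
      rw [if_neg (by omega), if_pos hvj]
      rw [hg]; simp only [if_pos hii]
      have : alp j = (1/2:ℝ)^j := by unfold alp; rw [if_pos hev]
      rw [hvj, this]
      have hle1 : Real.exp (-(2 * (1/2:ℝ)^j)) ≤ 1 := by
        rw [Real.exp_le_one_iff]
        have : (0:ℝ) ≤ (1/2:ℝ)^j := by positivity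
        linarith
      nlinarith [pow_nonneg (by norm_num : (0:ℝ) ≤ 1/2) j,
        Real.exp_pos (-(2 * (1/2:ℝ)^j))]
    · rw [hg]; simp only [if_neg hii, one_mul]
      by_cases hc : (i:ℕ) + 1 < j
      · rw [if_pos hc]
        have hb : alp ((i:ℕ)+1) ≤ (1/2:ℝ)^((i:ℕ)+1) := alp_le _
        have hx0 : (0:ℝ) ≤ (1/2:ℝ)^((i:ℕ)+1) := by positivity
        have hx1 : (1/2:ℝ)^((i:ℕ)+1) ≤ 1/2 := by
          calc (1/2:ℝ)^((i:ℕ)+1) ≤ (1/2:ℝ)^1 :=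
            pow_le_pow_of_le_one (by norm_num) (by norm_num) (by omega)
          _ = 1/2 := pow_one _
        have := one_sub_ge_exp hx0 hx1
        linarith
      · have hcj : (i:ℕ) + 1 ≠ j := by
          intro hh
          apply hii; apply Fin.ext; simp [hi0]; omega
        rw [if_neg hc, if_neg hcj]
        rw [Real.exp_le_one_iff]
        have : (0:ℝ) ≤ (1/2:ℝ)^((i:ℕ)+1) := by positivity
        linarith
  have hg0 : ∀ i ∈ Finset.univ, (0:ℝ) ≤ g i := by
    intro i _
    rw [hg]; simp only
    apply mul_nonneg
    · split <;> positivity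
    · positivity
  have hprod : ∏ i : Fin n, g i ≥ Real.exp (-2) * (1/2:ℝ)^j := by
    rw [hg]
    rw [Finset.prod_mul_distrib]
    rw [Finset.prod_ite_eq' Finset.univ i0 (fun _ => (1/2:ℝ)^j)]
    rw [if_pos (Finset.mem_univ i0)]
    rw [← Real.exp_sum]
    have hsum : ∑ i : Fin n, -(2 * (1/2:ℝ)^((i:ℕ)+1)) ≥ -2 := by
      have : ∑ i : Fin n, (1/2:ℝ)^((i:ℕ)+1) ≤ 1 := by
        rw [Fin.sum_univ_eq_sum_range (fun i => (1/2:ℝ)^(i+1))]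
        have : ∀ i ∈ Finset.range n, (1/2:ℝ)^(i+1) = (1/2) * (1/2)^i := by
          intro i _; ring
        rw [Finset.sum_congr rfl this, ← Finset.mul_sum]
        have := sum_geometric_two_le n
        linarith
      have heq : ∑ i : Fin n, -(2 * (1/2:ℝ)^((i:ℕ)+1))
          = -(2 * ∑ i : Fin n, (1/2:ℝ)^((i:ℕ)+1)) := by
        rw [Finset.mul_sum, ← Finset.sum_neg_distrib]
      rw [heq]
      linarith
    have := Real.exp_le_exp.mpr hsum
    nlinarith [Real.exp_pos (-2), pow_nonneg (by norm_num : (0:ℝ) ≤ 1/2) j,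
      Real.exp_pos (∑ i : Fin n, -(2 * (1/2:ℝ)^((i:ℕ)+1)))]
  have hle : ∏ i : Fin n, g i ≤ ∏ i : Fin n, f i := Finset.prod_le_prod hg0 hgf
  unfold wt
  rw [← hf]
  calc Real.exp (-2) * (1/2:ℝ) * (1/2:ℝ)^j = (1/2) * (Real.exp (-2) * (1/2:ℝ)^j) := by ring
    _ ≤ (1/2) * ∏ i : Fin n, g i := by linarith [hprod]
    _ ≤ (1/2) * ∏ i : Fin n, f i := by linarith [hle]


lemma muZ_ge_single (n : ℕ) (Γ : Set ℝ) (ω : Fin (n+1) → Fin 2) (hω : Zn n ω ∈ Γ) :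
    wt n ω ≤ muZ n Γ :=
  Finset.single_le_sum (fun i _ => wt_nonneg n i)
    (Finset.mem_filter.mpr ⟨Finset.mem_univ _, hω⟩)

lemma half_pow_eq_rpow (j : ℕ) : ((1:ℝ)/2)^j = (2:ℝ) ^ (-(j:ℝ)) := by
  rw [Real.rpow_neg (by norm_num : (0:ℝ) ≤ 2), Real.rpow_natCast]
  rw [div_pow, one_pow, one_div]

lemma key {n : ℕ} {a b : ℝ} (ha : 0 < a) (hb : b < 1) {ω : Fin (n+1) → Fin 2}
    (hZ : Zn n ω ∈ Set.Ioc a b) (hw : wt n ω ≠ 0) :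
    2 ≤ Z0 ω ∧ Z0 ω ≤ n ∧ (n:ℝ) * a < (Z0 ω : ℝ) - 1 := by
  obtain ⟨hZ1, hZ2⟩ := hZ
  have hcl := classify hw
  set j := Z0 ω with hj
  have hj2 : 2 ≤ j := by
    by_contra hc
    push_neg at hc
    have hzero : Zn n ω = 0 := by
      unfold Zn
      rw [Finset.sum_eq_zero, mul_zero]
      intro i _
      rw [hcl]
      have : pathJ n j i.succ = 1 := by
        simp only [pathJ]
        rw [if_neg]
        have : ((i.succ : Fin (n+1)) : ℕ) = (i:ℕ) + 1 := rfl
        omega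
      rw [this]
      simp
    rw [hzero] at hZ1
    linarith
  have hj1 : 1 ≤ j := by omega
  have hjn1 : j ≤ n + 1 := by
    have := Finset.card_le_univ (Finset.univ.filter (fun i => ω i = 0))
    rw [Fintype.card_fin] at this
    rw [hj]; exact this
  have hZeq : Zn n ω = (1 / (n:ℝ)) * ((j:ℝ) - 1) := by
    rw [hcl]; exact Zn_pathJ n j hj1 hjn1
  have hn : 1 ≤ n := by
    by_contra hc
    push_neg at hc
    have hn0 : n = 0 := by omega
    subst hn0
    have : Zn 0 ω = 0 := by unfold Zn; simp
    rw [this] at hZ1; linarith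
  have hnpos : (0:ℝ) < n := by exact_mod_cast hn
  rw [hZeq] at hZ1 hZ2
  have hlt : (n:ℝ) * a < (j:ℝ) - 1 := by
    rw [one_div, inv_mul_eq_div, lt_div_iff₀ hnpos] at hZ1
    nlinarith
  refine ⟨hj2, ?_, hlt⟩
  have hble : (j:ℝ) - 1 ≤ (n:ℝ) * b := by
    rw [one_div, inv_mul_eq_div, div_le_iff₀ hnpos] at hZ2
    nlinarith
  have hjr : (j:ℝ) < (n:ℝ) + 1 := by nlinarith
  have : j < n + 1 := by exact_mod_cast hjr
  omega

lemma wt_le_B {n : ℕ} {a b : ℝ} (ha : 0 < a) (hb : b < 1) {ω : Fin (n+1) → Fin 2}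
    (hZ : Zn n ω ∈ Set.Ioc a b) :
    wt n ω ≤ (2:ℝ) ^ (-((n:ℝ) * a)) := by
  by_cases hw : wt n ω = 0
  · rw [hw]; positivity
  obtain ⟨hj2, hjn, hlt⟩ := key ha hb hZ hw
  have hcl := classify hw
  calc wt n ω = wt n (pathJ n (Z0 ω)) := by rw [← hcl]
    _ ≤ alp (Z0 ω) := wt_pathJ_le n (Z0 ω) (by omega) hjn
    _ ≤ ((1:ℝ)/2)^(Z0 ω) := alp_le _
    _ = (2:ℝ) ^ (-((Z0 ω):ℝ)) := half_pow_eq_rpow _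
    _ ≤ (2:ℝ) ^ (-((n:ℝ) * a)) := by
        apply Real.rpow_le_rpow_of_exponent_le (by norm_num)
        linarith

lemma card_support_le {n : ℕ} (t : Finset (Fin (n+1) → Fin 2))
    (ht : ∀ ω ∈ t, wt n ω ≠ 0) : t.card ≤ n + 2 := by
  have := Finset.card_le_card_of_injOn (f := fun ω : Fin (n+1) → Fin 2 => Z0 ω)
    (s := t) (t := Finset.range (n+2))
    (by
      intro ω hω
      rw [Finset.mem_coe, Finset.mem_range]
      have hle := Finset.card_le_univ (Finset.univ.filter (fun i => ω i = 0))
      rw [Fintype.card_fin] at hle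
      simp only [Z0]
      omega)
    (by
      intro ω1 h1 ω2 h2 he
      have c1 := classify (ht ω1 h1)
      have c2 := classify (ht ω2 h2)
      simp only at he
      rw [c1, c2, he])
  simpa using this

lemma muZ_le {n : ℕ} {a b : ℝ} (ha : 0 < a) (hb : b < 1) :
    muZ n (Set.Ioc a b) ≤ ((n:ℝ) + 2) * (2:ℝ) ^ (-((n:ℝ) * a)) := by
  unfold muZ
  rw [Finset.filter_congr_decidable]
  rw [← Finset.sum_filter_ne_zero]
  refine le_trans (Finset.sum_le_sum (g := fun _ => (2:ℝ) ^ (-((n:ℝ) * a))) ?_) ?_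
  · intro ω hω
    exact wt_le_B ha hb (Finset.mem_filter.mp (Finset.mem_filter.mp hω).1).2
  · rw [Finset.sum_const, nsmul_eq_mul]
    apply mul_le_mul_of_nonneg_right _ (by positivity)
    refine le_trans (Nat.cast_le.mpr
      (card_support_le _ (fun ω hω => (Finset.mem_filter.mp hω).2))) ?_
    push_cast
    linarith

lemma muZ_ge {n : ℕ} {a b : ℝ} (ha : 0 < a) (hb : b < 1)
    (hn1 : 1 ≤ n) (hn2 : 2 ≤ (n:ℝ) * (b - a)) :
    Real.exp (-2) * (1/2:ℝ) * (2:ℝ) ^ (-((n:ℝ) * a + 3)) ≤ muZ n (Set.Ioc a b) := by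
  have hnpos : (0:ℝ) < n := by exact_mod_cast hn1
  set k := ⌊(n:ℝ) * a⌋₊ with hk
  set j := if Even k then k + 2 else k + 3 with hjdef
  set m := j - 1 with hm
  have hjk : j = k + 2 ∨ j = k + 3 := by
    rw [hjdef]; split <;> simp
  have hm' : m = j - 1 := hm
  have hmk : (m = k + 1 ∧ Even k) ∨ (m = k + 2 ∧ ¬ Even k) := by
    rw [hm, hjdef]; split <;> simp_all <;> omega
  have hevj : Even j := by
    rw [Nat.even_iff]
    rcases Nat.even_or_odd k with h | h
    · rw [hjdef, if_pos h]
      rw [Nat.even_iff] at h; omega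
    · have h' : ¬ Even k := Nat.not_even_iff_odd.mpr h
      rw [hjdef, if_neg h']
      rw [Nat.odd_iff] at h
      omega
  have hflt : (n:ℝ) * a < (k:ℝ) + 1 := Nat.lt_floor_add_one _
  have hfle : (k:ℝ) ≤ (n:ℝ) * a := Nat.floor_le (by positivity)
  have hm1 : (n:ℝ) * a < (m:ℝ) := by
    rcases hmk with ⟨he, _⟩ | ⟨he, _⟩ <;> rw [he] <;> push_cast <;> linarith
  have hm2 : (m:ℝ) ≤ (n:ℝ) * a + 2 := by
    rcases hmk with ⟨he, _⟩ | ⟨he, _⟩ <;> rw [he] <;> push_cast <;> linarith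
  have hm3 : (m:ℝ) ≤ (n:ℝ) * b := by nlinarith
  have hmn : m < n := by
    have : (m:ℝ) < (n:ℝ) := by nlinarith
    exact_mod_cast this
  have hjm : j = m + 1 := by omega
  have hjn : j ≤ n := by omega
  have hj1 : 1 ≤ j := by omega
  -- path is in the event
  have hZ : Zn n (pathJ n j) ∈ Set.Ioc a b := by
    rw [Zn_pathJ n j hj1 (by omega)]
    have hje : (j:ℝ) - 1 = (m:ℝ) := by
      rw [hjm]; push_cast; ring
    rw [hje]
    constructor
    · rw [one_div, inv_mul_eq_div, lt_div_iff₀ hnpos]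
      nlinarith
    · rw [one_div, inv_mul_eq_div, div_le_iff₀ hnpos]
      nlinarith
  have hwt := wt_pathJ_ge n j hj1 hjn hevj
  have hmu := muZ_ge_single n (Set.Ioc a b) (pathJ n j) hZ
  have hpow : (2:ℝ) ^ (-((n:ℝ) * a + 3)) ≤ ((1:ℝ)/2)^j := by
    rw [half_pow_eq_rpow]
    apply Real.rpow_le_rpow_of_exponent_le (by norm_num)
    have : (j:ℝ) ≤ (n:ℝ) * a + 3 := by
      rw [hjm]; push_cast; linarith
    linarith
  have he2 : (0:ℝ) < Real.exp (-2) := Real.exp_pos _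
  nlinarith [hwt, hmu, hpow]

lemma log_div_tendsto : Tendsto (fun n : ℕ => Real.log ((n:ℝ) + 2) / n) atTop (nhds 0) := by
  have h0 : Tendsto (fun x : ℝ => Real.log x / x) atTop (nhds 0) :=
    Real.isLittleO_log_id_atTop.tendsto_div_nhds_zero
  have hc : Tendsto (fun n : ℕ => (n:ℝ) + 2) atTop atTop :=
    tendsto_atTop_add_const_right _ 2 tendsto_natCast_atTop_atTop
  have h1 : Tendsto (fun n : ℕ => Real.log ((n:ℝ) + 2) / ((n:ℝ) + 2)) atTop (nhds 0) :=
    h0.comp hc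
  have h2 : Tendsto (fun n : ℕ => ((n:ℝ) + 2) / n) atTop (nhds 1) := by
    have h3 : Tendsto (fun n : ℕ => 1 + 2 / (n:ℝ)) atTop (nhds (1 + 0)) :=
      tendsto_const_nhds.add (tendsto_const_div_atTop_nhds_zero_nat 2)
    rw [add_zero] at h3
    apply h3.congr'
    filter_upwards [eventually_ge_atTop 1] with n hn
    have hne : (n:ℝ) ≠ 0 := by
      have : (1:ℝ) ≤ (n:ℝ) := by exact_mod_cast hn
      linarith
    field_simp
  have := h1.mul h2
  rw [mul_one] at this
  apply this.congr
  intro n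
  exact div_mul_div_cancel₀ (by positivity : ((n:ℝ) + 2) ≠ 0)

theorem stmt19 (a b : ℝ) (ha : 0 < a) (hab : a < b) (hb : b < 1) :
    Tendsto (fun n : ℕ => (1 / (n:ℝ)) * Real.log (muZ n (Set.Ioc a b))) atTop
      (nhds (-(a * Real.log 2))) := by
  have hlog2 : (0:ℝ) < Real.log 2 := Real.log_pos (by norm_num)
  have hba : (0:ℝ) < b - a := by linarith
  have hLlim : Tendsto (fun n : ℕ => (-2 - 4 * Real.log 2) / n - a * Real.log 2) atTop
      (nhds (-(a * Real.log 2))) := by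
    have h1 := (tendsto_const_div_atTop_nhds_zero_nat (-2 - 4 * Real.log 2)).sub_const
      (a * Real.log 2)
    rw [zero_sub] at h1
    exact h1
  have hUlim : Tendsto (fun n : ℕ => Real.log ((n:ℝ) + 2) / n - a * Real.log 2) atTop
      (nhds (-(a * Real.log 2))) := by
    have h1 := log_div_tendsto.sub_const (a * Real.log 2)
    rw [zero_sub] at h1
    exact h1
  apply tendsto_of_tendsto_of_tendsto_of_le_of_le' hLlim hUlim
  · -- lower bound eventually
    have hev : ∀ᶠ n : ℕ in atTop, 1 ≤ n ∧ 2 ≤ (n:ℝ) * (b - a) := by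
      have h2 : Tendsto (fun n : ℕ => (n:ℝ) * (b - a)) atTop atTop :=
        tendsto_natCast_atTop_atTop.atTop_mul_const hba
      filter_upwards [eventually_ge_atTop 1, h2.eventually_ge_atTop 2] with n h1 h2
      exact ⟨h1, h2⟩
    filter_upwards [hev] with n hn
    obtain ⟨hn1, hn2⟩ := hn
    have hnpos : (0:ℝ) < n := by exact_mod_cast hn1
    have hlo := muZ_ge ha hb hn1 hn2
    have hlogval : Real.log (Real.exp (-2) * (1/2:ℝ) * (2:ℝ) ^ (-((n:ℝ) * a + 3)))
        = -2 - Real.log 2 - ((n:ℝ) * a + 3) * Real.log 2 := by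
      rw [Real.log_mul (by positivity) (by positivity),
        Real.log_mul (by positivity) (by norm_num),
        Real.log_exp, Real.log_rpow (by norm_num)]
      rw [one_div, Real.log_inv]
      ring
    have hle : -2 - Real.log 2 - ((n:ℝ) * a + 3) * Real.log 2
        ≤ Real.log (muZ n (Set.Ioc a b)) := by
      rw [← hlogval]
      apply Real.log_le_log (by positivity) hlo
    have heq : (-2 - 4 * Real.log 2) / n - a * Real.log 2
        = (1 / (n:ℝ)) * (-2 - Real.log 2 - ((n:ℝ) * a + 3) * Real.log 2) := by
      field_simp
      ring
    rw [heq]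
    apply mul_le_mul_of_nonneg_left hle (by positivity)
  · -- upper bound eventually
    have hev : ∀ᶠ n : ℕ in atTop, 1 ≤ n ∧ 2 ≤ (n:ℝ) * (b - a) := by
      have h2 : Tendsto (fun n : ℕ => (n:ℝ) * (b - a)) atTop atTop :=
        tendsto_natCast_atTop_atTop.atTop_mul_const hba
      filter_upwards [eventually_ge_atTop 1, h2.eventually_ge_atTop 2] with n h1 h2
      exact ⟨h1, h2⟩
    filter_upwards [hev] with n hn
    obtain ⟨hn1, hn2⟩ := hn
    have hnpos : (0:ℝ) < n := by exact_mod_cast hn1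
    have hpos : (0:ℝ) < muZ n (Set.Ioc a b) :=
      lt_of_lt_of_le (by positivity) (muZ_ge ha hb hn1 hn2)
    have hup := muZ_le (n := n) ha hb
    have hlogval : Real.log (((n:ℝ) + 2) * (2:ℝ) ^ (-((n:ℝ) * a)))
        = Real.log ((n:ℝ) + 2) - (n:ℝ) * a * Real.log 2 := by
      rw [Real.log_mul (by positivity) (by positivity), Real.log_rpow (by norm_num)]
      ring
    have hle : Real.log (muZ n (Set.Ioc a b))
        ≤ Real.log ((n:ℝ) + 2) - (n:ℝ) * a * Real.log 2 := by
      rw [← hlogval]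
      exact Real.log_le_log hpos hup
    have heq : Real.log ((n:ℝ) + 2) / n - a * Real.log 2
        = (1 / (n:ℝ)) * (Real.log ((n:ℝ) + 2) - (n:ℝ) * a * Real.log 2) := by
      field_simp
    rw [heq]
    apply mul_le_mul_of_nonneg_left hle (by positivity)
end
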